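/- Let L_n be the graph on planar layouts of irreducible planar tanglegrams of size n with edges given by rotations (rotate at a vertex in one tree; if a proper subtanglegram is formed, additionally rotate at the corresponding vertex in the other tree). Then L_n is isomorphic to the flip graph D_{n+1} on pairs of disjoint triangulations of a convex (n+1)-gon. -/

import Mathlib

/-- A diagonal of the convex `n`-gon: an unordered pair of distinct,
non-adjacent vertices (vertices labeled by `Fin n` in cyclic order). -/
def IsDiag (n : ℕ) (d : Sym2 (Fin n)) : Prop :=
  ∃ a b : Fin n, d = s(a, b) ∧ a ≠ b ∧
    (a.val + 1) % n ≠ b.val ∧ (b.val + 1) % n ≠ a.val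

/-- Two diagonals of the convex `n`-gon cross (their endpoints strictly
interleave around the polygon). -/
def Crosses (n : ℕ) (d e : Sym2 (Fin n)) : Prop :=
  (∃ a b c c' : Fin n, d = s(a, b) ∧ e = s(c, c') ∧ a < c ∧ c < b ∧ b < c') ∨
  (∃ a b c c' : Fin n, e = s(a, b) ∧ d = s(c, c') ∧ a < c ∧ c < b ∧ b < c')

/-- A triangulation of the convex `n`-gon: a maximal set of pairwise
noncrossing diagonals. -/
structure Triangulation (n : ℕ) where
  diags : Finset (Sym2 (Fin n))
  isDiag : ∀ d ∈ diags, IsDiag n d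
  noncross : ∀ d ∈ diags, ∀ e ∈ diags, ¬ Crosses n d e
  maximal : ∀ d, IsDiag n d → (∀ e ∈ diags, ¬ Crosses n d e) → d ∈ diags

/-- `IsFlip T d T'` : the triangulation `T'` is obtained from `T` by flipping
the diagonal `d` (removing `d`, keeping all other diagonals, and inserting the
opposite diagonal of the resulting quadrilateral). -/
def IsFlip {n : ℕ} (T : Triangulation n) (d : Sym2 (Fin n)) (T' : Triangulation n) : Prop :=
  d ∈ T.diags ∧ d ∉ T'.diags ∧ ∀ e ∈ T.diags, e ≠ d → e ∈ T'.diags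

/-- Two triangulations are related by a single diagonal flip. -/
def FlipAdj {n : ℕ} (T T' : Triangulation n) : Prop := ∃ d, IsFlip T d T'

/-- `d'` is the new diagonal created when passing from `T` to `T'`. -/
def NewDiag {n : ℕ} (T T' : Triangulation n) (d' : Sym2 (Fin n)) : Prop :=
  d' ∈ T'.diags ∧ d' ∉ T.diags

/-- Flip of a pair of triangulations at a diagonal of the first coordinate:
flip it there, and if the new diagonal lies in the second triangulation,
flip it there as well. -/
def PairFlipFst {n : ℕ} (p q : Triangulation n × Triangulation n) : Prop :=
  ∃ d T₁' d', IsFlip p.1 d T₁' ∧ NewDiag p.1 T₁' d' ∧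
    ((d' ∉ p.2.diags ∧ q = (T₁', p.2)) ∨
     (d' ∈ p.2.diags ∧ ∃ T₂', IsFlip p.2 d' T₂' ∧ q = (T₁', T₂')))

/-- Flip of a pair of triangulations at a diagonal of the second coordinate. -/
def PairFlipSnd {n : ℕ} (p q : Triangulation n × Triangulation n) : Prop :=
  ∃ d T₂' d', IsFlip p.2 d T₂' ∧ NewDiag p.2 T₂' d' ∧
    ((d' ∉ p.1.diags ∧ q = (p.1, T₂')) ∨
     (d' ∈ p.1.diags ∧ ∃ T₁', IsFlip p.1 d' T₁' ∧ q = (T₁', T₂')))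

/-- The flip operation on ordered pairs of triangulations. -/
def PairFlip {n : ℕ} (p q : Triangulation n × Triangulation n) : Prop :=
  PairFlipFst p q ∨ PairFlipSnd p q

/-- Vertices of the flip graph `D_n`: ordered pairs of triangulations of the
convex `n`-gon sharing no diagonal. -/
def DVert (n : ℕ) := {p : Triangulation n × Triangulation n // Disjoint p.1.diags p.2.diags}

/-- The flip graph `D_n` on ordered pairs of disjoint triangulations. -/
def DGraph (n : ℕ) : SimpleGraph (DVert n) where
  Adj p q := p ≠ q ∧ (PairFlip p.1 q.1 ∨ PairFlip q.1 p.1)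
  symm := ⟨fun _ _ h => ⟨h.1.symm, h.2.symm⟩⟩
  loopless := ⟨fun _ h => h.1 rfl⟩

/-- The flip graph `T_n` on all triangulations of the convex `n`-gon. -/
def TriGraph (n : ℕ) : SimpleGraph (Triangulation n) where
  Adj T T' := T ≠ T' ∧ (FlipAdj T T' ∨ FlipAdj T' T)
  symm := ⟨fun _ _ h => ⟨h.1.symm, h.2.symm⟩⟩
  loopless := ⟨fun _ h => h.1 rfl⟩

/-- Vertices of `T_n(S)`: triangulations disjoint from `S`. -/
def TnSVert (n : ℕ) (S : Triangulation n) := {T : Triangulation n // Disjoint T.diags S.diags}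

/-- The flip graph `T_n(S)` induced on triangulations disjoint from `S`. -/
def TnS (n : ℕ) (S : Triangulation n) : SimpleGraph (TnSVert n S) where
  Adj T T' := T ≠ T' ∧ (FlipAdj T.1 T'.1 ∨ FlipAdj T'.1 T.1)
  symm := ⟨fun _ _ h => ⟨h.1.symm, h.2.symm⟩⟩
  loopless := ⟨fun _ h => h.1 rfl⟩

/-- A rooted plane binary tree (leaves unlabeled; children ordered). -/
inductive PTree : Type
  | leaf : PTree
  | node : PTree → PTree → PTree

/-- Number of leaves of a plane binary tree. -/
def PTree.leaves : PTree → ℕ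
  | .leaf => 1
  | .node l r => l.leaves + r.leaves

/-- The set of diagonals of the plane dual triangulation of a plane binary
tree whose leaves occupy positions `a, a+1, …, a + leaves - 1`: the subtree
spanning leaf positions `[b, c)` contributes the diagonal `(b, c)` of the
polygon whenever it is a proper subtree with at least two leaves. -/
def PTree.dualAux : PTree → ℕ → Finset (Sym2 ℕ)
  | .leaf, _ => ∅
  | .node l r, a =>
      l.dualAux a ∪ r.dualAux (a + l.leaves) ∪
        (if 2 ≤ l.leaves then {s(a, a + l.leaves)} else ∅) ∪
        (if 2 ≤ r.leaves then {s(a + l.leaves, a + l.leaves + r.leaves)} else ∅)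

/-- The plane dual triangulation of a plane binary tree `P` with `k` leaves,
as the set of diagonals of a convex `(k+1)`-gon with vertices `0, 1, …, k`
(the standard Catalan bijection). -/
def PTree.dual (P : PTree) : Finset (Sym2 ℕ) := P.dualAux 0

/-- The rotation relation on plane binary trees: `Rot P P'` holds when `P'`
is obtained from `P` by a single rotation at a (necessarily non-root,
internal) vertex. -/
inductive Rot : PTree → PTree → Prop
  | base (P₁ P₂ P₃ : PTree) :
      Rot (.node (.node P₁ P₂) P₃) (.node P₁ (.node P₂ P₃))
  | base' (P₁ P₂ P₃ : PTree) :
      Rot (.node P₁ (.node P₂ P₃)) (.node (.node P₁ P₂) P₃)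
  | left {L L' : PTree} (R : PTree) : Rot L L' → Rot (.node L R) (.node L' R)
  | right (L : PTree) {R R' : PTree} : Rot R R' → Rot (.node L R) (.node L R')

/-- `SubAt P a u` : `u` is a subtree of `P` whose leaves occupy the positions
`a, a+1, …, a + u.leaves - 1` among the leaves of `P` (left to right). -/
inductive SubAt : PTree → ℕ → PTree → Prop
  | refl (t : PTree) : SubAt t 0 t
  | left {l u : PTree} {a : ℕ} (r : PTree) : SubAt l a u → SubAt (.node l r) a u
  | right (l : PTree) {r u : PTree} {a : ℕ} :
      SubAt r a u → SubAt (.node l r) (l.leaves + a) u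

/-- A planar layout, given by its pair of plane binary trees (the matching
joins the leaves in equal positions), has a proper subtanglegram iff both
trees have a subtree with at least `2` leaves occupying the same proper
interval of leaf positions. `IrredLayout` says there is no such pair, i.e.
the layout is a layout of an irreducible tanglegram. -/
def IrredLayout (p : PTree × PTree) : Prop :=
  ¬ ∃ (a : ℕ) (u v : PTree), SubAt p.1 a u ∧ SubAt p.2 a v ∧
      u.leaves = v.leaves ∧ 2 ≤ u.leaves ∧ u.leaves < p.1.leaves

/-- Rotation of a layout at a vertex of the first tree: rotate there; if the
resulting layout has a proper subtanglegram, additionally rotate in the second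
tree so as to remove it. -/
def LRelFst (p q : PTree × PTree) : Prop :=
  ∃ P₁', Rot p.1 P₁' ∧
    ((IrredLayout (P₁', p.2) ∧ q = (P₁', p.2)) ∨
     (¬ IrredLayout (P₁', p.2) ∧
       ∃ P₂', Rot p.2 P₂' ∧ IrredLayout (P₁', P₂') ∧ q = (P₁', P₂')))

/-- Rotation of a layout at a vertex of the second tree. -/
def LRelSnd (p q : PTree × PTree) : Prop :=
  ∃ P₂', Rot p.2 P₂' ∧
    ((IrredLayout (p.1, P₂') ∧ q = (p.1, P₂')) ∨
     (¬ IrredLayout (p.1, P₂') ∧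
       ∃ P₁', Rot p.1 P₁' ∧ IrredLayout (P₁', P₂') ∧ q = (P₁', P₂')))

/-- The rotation operation on planar layouts of irreducible planar
tanglegrams. -/
def LRel (p q : PTree × PTree) : Prop := LRelFst p q ∨ LRelSnd p q

/-- Vertices of the graph `L_n`: planar layouts of irreducible planar
tanglegrams of size `n`. -/
def LVert (n : ℕ) :=
  {p : PTree × PTree // p.1.leaves = n ∧ p.2.leaves = n ∧ IrredLayout p}

/-- The graph `L_n` on planar layouts of irreducible planar tanglegrams of
size `n`, with edges given by rotations. -/
def LGraph (n : ℕ) : SimpleGraph (LVert n) where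
  Adj p q := p ≠ q ∧ (LRel p.1 q.1 ∨ LRel q.1 p.1)
  symm := ⟨fun _ _ h => ⟨h.1.symm, h.2.symm⟩⟩
  loopless := ⟨fun _ h => h.1 rfl⟩



/-- crossing of ordered pairs of naturals -/
def NX (x y p q : ℕ) : Prop := (x < p ∧ p < y ∧ y < q) ∨ (p < x ∧ x < q ∧ q < y)

lemma sym2_nat_eq {x y u v : ℕ} (h1 : x < y) (h2 : u < v) :
    s(x,y) = s(u,v) ↔ x = u ∧ y = v := by
  rw [Sym2.eq_iff]; omega

lemma PTree.leaves_pos (P : PTree) : 1 ≤ P.leaves := by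
  induction P with
  | leaf => simp [PTree.leaves]
  | node l r ihl ihr => simp [PTree.leaves]; omega

lemma PTree.eq_leaf (P : PTree) (h : P.leaves = 1) : P = .leaf := by
  cases P with
  | leaf => rfl
  | node l r =>
    have := PTree.leaves_pos l; have := PTree.leaves_pos r
    simp [PTree.leaves] at h; omega

lemma PTree.exists_node (P : PTree) (h : 2 ≤ P.leaves) :
    ∃ l r, P = .node l r := by
  cases P with
  | leaf => simp [PTree.leaves] at h
  | node l r => exact ⟨l, r, rfl⟩

lemma Rot.leaves_eq {P Q : PTree} (h : Rot P Q) : P.leaves = Q.leaves := by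
  induction h with
  | base P₁ P₂ P₃ => simp [PTree.leaves]; omega
  | base' P₁ P₂ P₃ => simp [PTree.leaves]; omega
  | left R _ ih => simp [PTree.leaves, ih]
  | right L _ ih => simp [PTree.leaves, ih]

lemma SubAt.add_le {P u : PTree} {b : ℕ} (h : SubAt P b u) :
    b + u.leaves ≤ P.leaves := by
  induction h with
  | refl t => omega
  | left r _ ih => simp [PTree.leaves]; omega
  | right l _ ih => simp [PTree.leaves]; omega

lemma SubAt.eq_of_leaves {P u : PTree} {b : ℕ} (h : SubAt P b u)
    (hl : u.leaves = P.leaves) : b = 0 ∧ u = P := by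
  induction h with
  | refl t => exact ⟨rfl, rfl⟩
  | left r h ih =>
    have := h.add_le; have := r.leaves_pos
    simp [PTree.leaves] at hl; omega
  | right l h ih =>
    have := h.add_le; have := l.leaves_pos
    simp [PTree.leaves] at hl; omega

lemma SubAt.trans {P q u : PTree} {b c : ℕ} (h1 : SubAt P b q) (h2 : SubAt q c u) :
    SubAt P (b + c) u := by
  induction h1 with
  | refl t => simpa using h2
  | left r h ih => exact .left r (ih h2)
  | right l h ih => have := SubAt.right l (ih h2); simpa [Nat.add_assoc] using this

lemma SubAt.childL (l r : PTree) : SubAt (.node l r) 0 l := .left r (.refl l)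
lemma SubAt.childR (l r : PTree) : SubAt (.node l r) l.leaves r := by
  simpa using SubAt.right l (.refl r)

/-- parent lemma -/
lemma SubAt.parent {P u : PTree} {b : ℕ} (h : SubAt P b u) (hlt : u.leaves < P.leaves) :
    (∃ w, SubAt P b (.node u w)) ∨ (∃ c w, SubAt P c (.node w u) ∧ b = c + w.leaves) := by
  induction h with
  | refl t => omega
  | left r h ih =>
    rename_i l u b
    by_cases he : u.leaves = l.leaves
    · obtain ⟨rfl, rfl⟩ := h.eq_of_leaves he
      exact .inl ⟨r, .refl _⟩
    · have hlt' : u.leaves < l.leaves := lt_of_le_of_ne (by have := h.add_le; omega) he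
      rcases ih hlt' with ⟨w, hw⟩ | ⟨c, w, hw, rfl⟩
      · exact .inl ⟨w, .left r hw⟩
      · exact .inr ⟨c, w, .left r hw, rfl⟩
  | right l h ih =>
    rename_i r u b
    by_cases he : u.leaves = r.leaves
    · obtain ⟨rfl, rfl⟩ := h.eq_of_leaves he
      exact .inr ⟨0, l, by simpa using SubAt.refl (.node l u), by omega⟩
    · have hlt' : u.leaves < r.leaves := lt_of_le_of_ne (by have := h.add_le; omega) he
      rcases ih hlt' with ⟨w, hw⟩ | ⟨c, w, hw, rfl⟩
      · exact .inl ⟨w, .right l hw⟩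
      · exact .inr ⟨l.leaves + c, w, .right l hw, by omega⟩



lemma PTree.leaves_node (l r : PTree) :
    (PTree.node l r).leaves = l.leaves + r.leaves := rfl

lemma dualAux_node_mem {L R : PTree} {a : ℕ} {d : Sym2 ℕ} :
    d ∈ (PTree.node L R).dualAux a ↔
      d ∈ L.dualAux a ∨ d ∈ R.dualAux (a + L.leaves) ∨
      (d = s(a, a + L.leaves) ∧ 2 ≤ L.leaves) ∨
      (d = s(a + L.leaves, a + L.leaves + R.leaves) ∧ 2 ≤ R.leaves) := by
  by_cases h1 : 2 ≤ L.leaves <;> by_cases h2 : 2 ≤ R.leaves <;>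
    simp [PTree.dualAux, h1, h2, Finset.mem_union, or_assoc] <;> tauto

lemma PTree.mem_dualAux_iff {P : PTree} {a : ℕ} {d : Sym2 ℕ} :
    d ∈ P.dualAux a ↔ ∃ b l r, SubAt P b (.node l r) ∧
      ((d = s(a + b, a + b + l.leaves) ∧ 2 ≤ l.leaves) ∨
       (d = s(a + b + l.leaves, a + b + l.leaves + r.leaves) ∧ 2 ≤ r.leaves)) := by
  induction P generalizing a with
  | leaf =>
    simp only [PTree.dualAux, Finset.notMem_empty, false_iff]
    rintro ⟨b, l, r, h, -⟩; cases h
  | node L R ihL ihR =>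
    rw [dualAux_node_mem]
    constructor
    · rintro (h | h | ⟨rfl, h2⟩ | ⟨rfl, h2⟩)
      · obtain ⟨b, l, r, hs, hor⟩ := ihL.1 h
        exact ⟨b, l, r, hs.left R, hor⟩
      · obtain ⟨b, l, r, hs, hor⟩ := ihR.1 h
        refine ⟨L.leaves + b, l, r, SubAt.right L hs, ?_⟩
        have e1 : a + L.leaves + b = a + (L.leaves + b) := by omega
        rwa [e1] at hor
      · exact ⟨0, L, R, .refl _, .inl ⟨by norm_num, h2⟩⟩
      · exact ⟨0, L, R, .refl _, .inr ⟨by norm_num, h2⟩⟩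
    · rintro ⟨b, l, r, hs, hor⟩
      cases hs with
      | refl =>
        rcases hor with ⟨rfl, h2⟩ | ⟨rfl, h2⟩
        · exact .inr (.inr (.inl ⟨by norm_num, h2⟩))
        · exact .inr (.inr (.inr ⟨by norm_num, h2⟩))
      | left r' hs' =>
        exact .inl (ihL.2 ⟨b, l, r, hs', hor⟩)
      | right _ hs' =>
        rename_i b2
        refine .inr (.inl (ihR.2 ⟨b2, l, r, hs', ?_⟩))
        have e1 : a + (PTree.leaves L + b2) = a + PTree.leaves L + b2 := by omega
        rwa [e1] at hor

lemma PTree.mem_dualAux_interval {P : PTree} {a : ℕ} {d : Sym2 ℕ} :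
    d ∈ P.dualAux a ↔ ∃ b u, SubAt P b u ∧ 2 ≤ u.leaves ∧ u.leaves < P.leaves ∧
      d = s(a + b, a + b + u.leaves) := by
  constructor
  · intro h
    obtain ⟨b, l, r, hs, hor⟩ := PTree.mem_dualAux_iff.1 h
    have hadd := hs.add_le
    have hl := l.leaves_pos; have hr := r.leaves_pos
    have hln : (PTree.node l r).leaves = l.leaves + r.leaves := rfl
    rcases hor with ⟨rfl, h2⟩ | ⟨rfl, h2⟩
    · refine ⟨b, l, by simpa using hs.trans (SubAt.childL l r), h2, by omega, rfl⟩
    · refine ⟨b + l.leaves, r, ?_, h2, by omega, by rw [Nat.add_assoc]⟩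
      simpa using hs.trans (SubAt.childR l r)
  · rintro ⟨b, u, hs, h2, hlt, rfl⟩
    rcases hs.parent (by omega) with ⟨w, hw⟩ | ⟨c, w, hw, rfl⟩
    · exact PTree.mem_dualAux_iff.2 ⟨b, u, w, hw, .inl ⟨rfl, h2⟩⟩
    · refine PTree.mem_dualAux_iff.2 ⟨c, w, u, hw, .inr ⟨?_, h2⟩⟩
      rw [show a + (c + w.leaves) = a + c + w.leaves by omega]

lemma PTree.mem_dualAux_bounds {P : PTree} {a : ℕ} {d : Sym2 ℕ} (h : d ∈ P.dualAux a) :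
    ∃ p q, d = s(p, q) ∧ a ≤ p ∧ p + 2 ≤ q ∧ q ≤ a + P.leaves ∧
      ¬(p = a ∧ q = a + P.leaves) := by
  obtain ⟨b, u, hs, h2, hlt, rfl⟩ := PTree.mem_dualAux_interval.1 h
  have := hs.add_le
  exact ⟨a + b, a + b + u.leaves, rfl, by omega, by omega, by omega, by omega⟩

lemma SubAt.laminar {P u v : PTree} {b c : ℕ} (h1 : SubAt P b u) (h2 : SubAt P c v) :
    b + u.leaves ≤ c ∨ c + v.leaves ≤ b ∨ (b ≤ c ∧ c + v.leaves ≤ b + u.leaves) ∨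
      (c ≤ b ∧ b + u.leaves ≤ c + v.leaves) := by
  induction h1 generalizing c v with
  | refl t => have := h2.add_le; omega
  | left r h ih =>
    cases h2 with
    | refl => have := h.add_le; have := r.leaves_pos
              simp only [PTree.leaves_node]; omega
    | left r' h' => exact ih h'
    | right l' h' =>
      have := h.add_le; have := h'.add_le; omega
  | right l h ih =>
    cases h2 with
    | refl => have := h.add_le; have := l.leaves_pos
              simp only [PTree.leaves_node]; omega
    | left r' h' => have := h.add_le; have := h'.add_le; omega
    | right l' h' => have := ih h'; omega

lemma dual_noncross {P : PTree} {a p q x y : ℕ} (hpq : p < q) (hxy : x < y)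
    (h1 : s(p, q) ∈ P.dualAux a) (h2 : s(x, y) ∈ P.dualAux a) : ¬ NX x y p q := by
  obtain ⟨b, u, hsu, h2u, -, he1⟩ := PTree.mem_dualAux_interval.1 h1
  obtain ⟨c, v, hsv, h2v, -, he2⟩ := PTree.mem_dualAux_interval.1 h2
  rw [sym2_nat_eq hpq (by omega)] at he1
  rw [sym2_nat_eq hxy (by omega)] at he2
  have := hsu.laminar hsv
  unfold NX; omega

lemma dual_maximal (P : PTree) : ∀ a x y, a ≤ x → x + 2 ≤ y → y ≤ a + P.leaves →
    ¬(x = a ∧ y = a + P.leaves) →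
    (∀ p q, p < q → s(p, q) ∈ P.dualAux a → ¬ NX x y p q) →
    s(x, y) ∈ P.dualAux a := by
  induction P with
  | leaf => intro a x y h1 h2 h3 _ _; simp [PTree.leaves] at h3; omega
  | node L R ihL ihR =>
    intro a x y hax hxy hyb hne hcompat
    have hk := L.leaves_pos; have hm := R.leaves_pos
    have hln : (PTree.node L R).leaves = L.leaves + R.leaves := rfl
    rw [hln] at hyb hne
    by_cases hyk : y ≤ a + L.leaves
    · by_cases hroot : x = a ∧ y = a + L.leaves
      · exact dualAux_node_mem.2 (.inr (.inr (.inl ⟨by rw [hroot.1, hroot.2], by omega⟩)))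
      · refine dualAux_node_mem.2 (.inl (ihL a x y hax hxy hyk hroot ?_))
        intro p q hpq hmem
        exact hcompat p q hpq (dualAux_node_mem.2 (.inl hmem))
    · push_neg at hyk
      have hxk : a + L.leaves ≤ x := by
        by_contra hc
        push_neg at hc
        rcases Nat.lt_or_ge a x with hax' | hax'
        · -- a < x < a + L.leaves < y : crosses (a, a+L.leaves)
          have h2L : 2 ≤ L.leaves := by omega
          have hmem : s(a, a + L.leaves) ∈ (PTree.node L R).dualAux a :=
            dualAux_node_mem.2 (.inr (.inr (.inl ⟨rfl, h2L⟩)))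
          exact hcompat a (a + L.leaves) (by omega) hmem (.inr ⟨hax', hc, hyk⟩)
        · have hxa : x = a := by omega
          by_cases hyn : y = a + (L.leaves + R.leaves)
          · exact absurd ⟨hxa, hyn⟩ hne
          · have h2R : 2 ≤ R.leaves := by omega
            have hmem : s(a + L.leaves, a + L.leaves + R.leaves) ∈ (PTree.node L R).dualAux a :=
              dualAux_node_mem.2 (.inr (.inr (.inr ⟨rfl, h2R⟩)))
            exact hcompat (a + L.leaves) (a + L.leaves + R.leaves) (by omega) hmem
              (.inl ⟨by omega, hyk, by omega⟩)
      by_cases hroot : x = a + L.leaves ∧ y = a + L.leaves + R.leaves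
      · exact dualAux_node_mem.2 (.inr (.inr (.inr ⟨by rw [hroot.1, hroot.2], by omega⟩)))
      · refine dualAux_node_mem.2 (.inr (.inl (ihR (a + L.leaves) x y hxk hxy (by omega) ?_ ?_)))
        · omega
        · intro p q hpq hmem
          exact hcompat p q hpq (dualAux_node_mem.2 (.inr (.inl hmem)))

lemma mem_dualAux_bounds' {Q : PTree} {a x y : ℕ} (hxy : x < y) (h : s(x,y) ∈ Q.dualAux a) :
    a ≤ x ∧ x + 2 ≤ y ∧ y ≤ a + Q.leaves ∧ ¬(x = a ∧ y = a + Q.leaves) := by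
  obtain ⟨p, q, he, h1, h2, h3, h4⟩ := PTree.mem_dualAux_bounds h
  rw [sym2_nat_eq hxy (by omega)] at he
  omega

lemma mem_dual_LL {P₁ P₂ P₃ : PTree} {a : ℕ} {d : Sym2 ℕ} :
    d ∈ (PTree.node (.node P₁ P₂) P₃).dualAux a ↔
      (d ∈ P₁.dualAux a ∨ d ∈ P₂.dualAux (a + P₁.leaves) ∨
       d ∈ P₃.dualAux (a + P₁.leaves + P₂.leaves) ∨
       (d = s(a, a + P₁.leaves) ∧ 2 ≤ P₁.leaves) ∨
       (d = s(a + P₁.leaves, a + P₁.leaves + P₂.leaves) ∧ 2 ≤ P₂.leaves) ∨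
       (d = s(a + P₁.leaves + P₂.leaves, a + P₁.leaves + P₂.leaves + P₃.leaves) ∧ 2 ≤ P₃.leaves) ∨
       d = s(a, a + P₁.leaves + P₂.leaves)) := by
  have h2 : 2 ≤ (PTree.node P₁ P₂).leaves := by
    have := P₁.leaves_pos; have := P₂.leaves_pos; simp [PTree.leaves_node]; omega
  simp only [dualAux_node_mem, PTree.leaves_node, ← Nat.add_assoc, h2, and_true]
  tauto

lemma mem_dual_RR {P₁ P₂ P₃ : PTree} {a : ℕ} {d : Sym2 ℕ} :
    d ∈ (PTree.node P₁ (.node P₂ P₃)).dualAux a ↔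
      (d ∈ P₁.dualAux a ∨ d ∈ P₂.dualAux (a + P₁.leaves) ∨
       d ∈ P₃.dualAux (a + P₁.leaves + P₂.leaves) ∨
       (d = s(a, a + P₁.leaves) ∧ 2 ≤ P₁.leaves) ∨
       (d = s(a + P₁.leaves, a + P₁.leaves + P₂.leaves) ∧ 2 ≤ P₂.leaves) ∨
       (d = s(a + P₁.leaves + P₂.leaves, a + P₁.leaves + P₂.leaves + P₃.leaves) ∧ 2 ≤ P₃.leaves) ∨
       d = s(a + P₁.leaves, a + P₁.leaves + P₂.leaves + P₃.leaves)) := by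
  have h2 : 2 ≤ (PTree.node P₂ P₃).leaves := by
    have := P₂.leaves_pos; have := P₃.leaves_pos; simp [PTree.leaves_node]; omega
  simp only [dualAux_node_mem, PTree.leaves_node, ← Nat.add_assoc, h2, and_true]
  tauto

lemma rot_flip {P P' : PTree} (h : Rot P P') (a : ℕ) :
    ∃ p q p' q', p < q ∧ p' < q' ∧ s(p,q) ∈ P.dualAux a ∧ s(p',q') ∉ P.dualAux a ∧
      s(p,q) ∉ P'.dualAux a ∧ s(p',q') ∈ P'.dualAux a ∧
      ∀ e, e ≠ s(p,q) → e ≠ s(p',q') → (e ∈ P.dualAux a ↔ e ∈ P'.dualAux a) := by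
  induction h generalizing a with
  | base P₁ P₂ P₃ =>
    have k1 := P₁.leaves_pos; have k2 := P₂.leaves_pos; have k3 := P₃.leaves_pos
    refine ⟨a, a + P₁.leaves + P₂.leaves, a + P₁.leaves,
      a + P₁.leaves + P₂.leaves + P₃.leaves, by omega, by omega, ?_, ?_, ?_, ?_, ?_⟩
    · exact mem_dual_LL.2 (by tauto)
    · intro hmem
      rcases mem_dual_LL.1 hmem with h | h | h | ⟨h, h2⟩ | ⟨h, h2⟩ | ⟨h, h2⟩ | h
      · exact absurd (mem_dualAux_bounds' (by omega) h) (by omega)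
      · exact absurd (mem_dualAux_bounds' (by omega) h) (by omega)
      · exact absurd (mem_dualAux_bounds' (by omega) h) (by omega)
      · rw [sym2_nat_eq (by omega) (by omega)] at h; omega
      · rw [sym2_nat_eq (by omega) (by omega)] at h; omega
      · rw [sym2_nat_eq (by omega) (by omega)] at h; omega
      · rw [sym2_nat_eq (by omega) (by omega)] at h; omega
    · intro hmem
      rcases mem_dual_RR.1 hmem with h | h | h | ⟨h, h2⟩ | ⟨h, h2⟩ | ⟨h, h2⟩ | h
      · exact absurd (mem_dualAux_bounds' (by omega) h) (by omega)
      · exact absurd (mem_dualAux_bounds' (by omega) h) (by omega)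
      · exact absurd (mem_dualAux_bounds' (by omega) h) (by omega)
      · rw [sym2_nat_eq (by omega) (by omega)] at h; omega
      · rw [sym2_nat_eq (by omega) (by omega)] at h; omega
      · rw [sym2_nat_eq (by omega) (by omega)] at h; omega
      · rw [sym2_nat_eq (by omega) (by omega)] at h; omega
    · exact mem_dual_RR.2 (by tauto)
    · intro e he1 he2
      rw [mem_dual_LL, mem_dual_RR]
      constructor
      · rintro (h | h | h | h | h | h | h) <;> tauto
      · rintro (h | h | h | h | h | h | h) <;> tauto
  | base' P₁ P₂ P₃ =>
    have k1 := P₁.leaves_pos; have k2 := P₂.leaves_pos; have k3 := P₃.leaves_pos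
    refine ⟨a + P₁.leaves, a + P₁.leaves + P₂.leaves + P₃.leaves, a,
      a + P₁.leaves + P₂.leaves, by omega, by omega, ?_, ?_, ?_, ?_, ?_⟩
    · exact mem_dual_RR.2 (by tauto)
    · intro hmem
      rcases mem_dual_RR.1 hmem with h | h | h | ⟨h, h2⟩ | ⟨h, h2⟩ | ⟨h, h2⟩ | h
      · exact absurd (mem_dualAux_bounds' (by omega) h) (by omega)
      · exact absurd (mem_dualAux_bounds' (by omega) h) (by omega)
      · exact absurd (mem_dualAux_bounds' (by omega) h) (by omega)
      · rw [sym2_nat_eq (by omega) (by omega)] at h; omega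
      · rw [sym2_nat_eq (by omega) (by omega)] at h; omega
      · rw [sym2_nat_eq (by omega) (by omega)] at h; omega
      · rw [sym2_nat_eq (by omega) (by omega)] at h; omega
    · intro hmem
      rcases mem_dual_LL.1 hmem with h | h | h | ⟨h, h2⟩ | ⟨h, h2⟩ | ⟨h, h2⟩ | h
      · exact absurd (mem_dualAux_bounds' (by omega) h) (by omega)
      · exact absurd (mem_dualAux_bounds' (by omega) h) (by omega)
      · exact absurd (mem_dualAux_bounds' (by omega) h) (by omega)
      · rw [sym2_nat_eq (by omega) (by omega)] at h; omega
      · rw [sym2_nat_eq (by omega) (by omega)] at h; omega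
      · rw [sym2_nat_eq (by omega) (by omega)] at h; omega
      · rw [sym2_nat_eq (by omega) (by omega)] at h; omega
    · exact mem_dual_LL.2 (by tauto)
    · intro e he1 he2
      rw [mem_dual_LL, mem_dual_RR]
      constructor
      · rintro (h | h | h | h | h | h | h) <;> tauto
      · rintro (h | h | h | h | h | h | h) <;> tauto
  | left R hrot ih =>
    rename_i L L'
    obtain ⟨p, q, p', q', hpq, hpq', hm1, hm2, hm3, hm4, hiff⟩ := ih a
    have hL : L'.leaves = L.leaves := hrot.leaves_eq.symm
    have hb1 := mem_dualAux_bounds' hpq hm1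
    have hb2 := mem_dualAux_bounds' hpq' hm4
    rw [hL] at hb2
    refine ⟨p, q, p', q', hpq, hpq', ?_, ?_, ?_, ?_, ?_⟩
    · exact dualAux_node_mem.2 (.inl hm1)
    · intro hmem
      rcases dualAux_node_mem.1 hmem with h | h | ⟨h, h2⟩ | ⟨h, h2⟩
      · exact hm2 h
      · exact absurd (mem_dualAux_bounds' hpq' h) (by omega)
      · rw [sym2_nat_eq (by omega) (by omega)] at h; omega
      · rw [sym2_nat_eq (by omega) (by omega)] at h
        have := R.leaves_pos; omega
    · intro hmem
      rcases dualAux_node_mem.1 hmem with h | h | ⟨h, h2⟩ | ⟨h, h2⟩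
      · exact hm3 h
      · rw [hL] at h; exact absurd (mem_dualAux_bounds' hpq h) (by omega)
      · rw [hL] at h; rw [sym2_nat_eq (by omega) (by omega)] at h; omega
      · rw [hL] at h; rw [sym2_nat_eq (by omega) (by omega)] at h
        have := R.leaves_pos; omega
    · exact dualAux_node_mem.2 (.inl hm4)
    · intro e he1 he2
      rw [dualAux_node_mem, dualAux_node_mem, hL, hiff e he1 he2]
  | right L hrot ih =>
    rename_i R R'
    obtain ⟨p, q, p', q', hpq, hpq', hm1, hm2, hm3, hm4, hiff⟩ := ih (a + L.leaves)
    have hR : R'.leaves = R.leaves := hrot.leaves_eq.symm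
    have hb1 := mem_dualAux_bounds' hpq hm1
    have hb2 := mem_dualAux_bounds' hpq' hm4
    rw [hR] at hb2
    refine ⟨p, q, p', q', hpq, hpq', ?_, ?_, ?_, ?_, ?_⟩
    · exact dualAux_node_mem.2 (.inr (.inl hm1))
    · intro hmem
      rcases dualAux_node_mem.1 hmem with h | h | ⟨h, h2⟩ | ⟨h, h2⟩
      · exact absurd (mem_dualAux_bounds' hpq' h) (by omega)
      · exact hm2 h
      · rw [sym2_nat_eq (by omega) (by omega)] at h; omega
      · rw [sym2_nat_eq (by omega) (by omega)] at h; omega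
    · intro hmem
      rcases dualAux_node_mem.1 hmem with h | h | ⟨h, h2⟩ | ⟨h, h2⟩
      · exact absurd (mem_dualAux_bounds' hpq h) (by omega)
      · exact hm3 h
      · rw [sym2_nat_eq (by omega) (by omega)] at h; omega
      · rw [hR] at h; rw [sym2_nat_eq (by omega) (by omega)] at h; omega
    · exact dualAux_node_mem.2 (.inr (.inl hm4))
    · intro e he1 he2
      rw [dualAux_node_mem, dualAux_node_mem, hR, hiff e he1 he2]

lemma flip_exists_main {P : PTree} : ∀ {a p q : ℕ}, p < q → s(p,q) ∈ P.dualAux a →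
    ∃ P' p' q', Rot P P' ∧ p' < q' ∧ s(p,q) ∉ P'.dualAux a ∧
      s(p',q') ∈ P'.dualAux a ∧ s(p',q') ∉ P.dualAux a ∧
      ∀ x y, a ≤ x → x < y → y ≤ a + P.leaves → NX x y p q →
        (∀ u v, u < v → s(u,v) ∈ P.dualAux a → ¬(u = p ∧ v = q) → ¬ NX x y u v) →
        x = p' ∧ y = q' := by
  induction P with
  | leaf => intro a p q hpq hd; simp [PTree.dualAux] at hd
  | node L R ihL ihR =>
    intro a p q hpq hd
    have hk := L.leaves_pos; have hm := R.leaves_pos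
    rcases dualAux_node_mem.1 hd with h | h | ⟨he, h2⟩ | ⟨he, h2⟩
    · -- d in left part
      obtain ⟨L', p', q', hrot, hpq', hm3, hm4, hm5, huniq⟩ := ihL hpq h
      have hL : L'.leaves = L.leaves := hrot.leaves_eq.symm
      have hb1 := mem_dualAux_bounds' hpq h
      have hb2 := mem_dualAux_bounds' hpq' hm4
      rw [hL] at hb2
      have h2L : 2 ≤ L.leaves := by omega
      refine ⟨.node L' R, p', q', .left R hrot, hpq', ?_, ?_, ?_, ?_⟩
      · intro hmem
        rcases dualAux_node_mem.1 hmem with h' | h' | ⟨h', _⟩ | ⟨h', _⟩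
        · exact hm3 h'
        · rw [hL] at h'; exact absurd (mem_dualAux_bounds' hpq h') (by omega)
        · rw [hL] at h'; rw [sym2_nat_eq (by omega) (by omega)] at h'; omega
        · rw [hL] at h'; rw [sym2_nat_eq (by omega) (by omega)] at h'; omega
      · exact dualAux_node_mem.2 (.inl hm4)
      · intro hmem
        rcases dualAux_node_mem.1 hmem with h' | h' | ⟨h', _⟩ | ⟨h', _⟩
        · exact hm5 h'
        · exact absurd (mem_dualAux_bounds' hpq' h') (by omega)
        · rw [sym2_nat_eq (by omega) (by omega)] at h'; omega
        · rw [sym2_nat_eq (by omega) (by omega)] at h'; omega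
      · intro x y hax hxy hyn hnx hcompat
        have hyk : y ≤ a + L.leaves := by
          rcases hnx with ⟨h1, h2', h3⟩ | ⟨h1, h2', h3⟩
          · omega
          · by_contra hc
            push_neg at hc
            refine hcompat a (a + L.leaves) (by omega)
              (dualAux_node_mem.2 (.inr (.inr (.inl ⟨rfl, h2L⟩)))) (by omega)
              (.inr ⟨by omega, by omega, by omega⟩)
        refine huniq x y hax hxy hyk hnx ?_
        intro u v huv hmem hne
        exact hcompat u v huv (dualAux_node_mem.2 (.inl hmem)) hne
    · -- d in right part
      obtain ⟨R', p', q', hrot, hpq', hm3, hm4, hm5, huniq⟩ := ihR hpq h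
      have hR : R'.leaves = R.leaves := hrot.leaves_eq.symm
      have hb1 := mem_dualAux_bounds' hpq h
      have hb2 := mem_dualAux_bounds' hpq' hm4
      rw [hR] at hb2
      have h2R : 2 ≤ R.leaves := by omega
      refine ⟨.node L R', p', q', .right L hrot, hpq', ?_, ?_, ?_, ?_⟩
      · intro hmem
        rcases dualAux_node_mem.1 hmem with h' | h' | ⟨h', _⟩ | ⟨h', _⟩
        · exact absurd (mem_dualAux_bounds' hpq h') (by omega)
        · exact hm3 h'
        · rw [sym2_nat_eq (by omega) (by omega)] at h'; omega
        · rw [hR] at h'; rw [sym2_nat_eq (by omega) (by omega)] at h'; omega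
      · exact dualAux_node_mem.2 (.inr (.inl hm4))
      · intro hmem
        rcases dualAux_node_mem.1 hmem with h' | h' | ⟨h', _⟩ | ⟨h', _⟩
        · exact absurd (mem_dualAux_bounds' hpq' h') (by omega)
        · exact hm5 h'
        · rw [sym2_nat_eq (by omega) (by omega)] at h'; omega
        · rw [sym2_nat_eq (by omega) (by omega)] at h'; omega
      · intro x y hax hxy hyn hnx hcompat
        simp only [PTree.leaves_node] at hyn
        have hxk : a + L.leaves ≤ x := by
          rcases hnx with ⟨h1, h2', h3⟩ | ⟨h1, h2', h3⟩
          · by_contra hc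
            push_neg at hc
            refine hcompat (a + L.leaves) (a + L.leaves + R.leaves) (by omega)
              (dualAux_node_mem.2 (.inr (.inr (.inr ⟨rfl, h2R⟩)))) (by omega)
              (.inl ⟨by omega, by omega, by omega⟩)
          · omega
        refine huniq x y hxk hxy (by omega) hnx ?_
        intro u v huv hmem hne
        exact hcompat u v huv (dualAux_node_mem.2 (.inr (.inl hmem))) hne
    · -- d is the left root diagonal (p, p + L.leaves)
      rw [sym2_nat_eq hpq (by omega)] at he
      obtain ⟨rfl, rfl⟩ := he
      obtain ⟨L₁, L₂, rfl⟩ := L.exists_node h2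
      have k1 := L₁.leaves_pos; have k2 := L₂.leaves_pos
      rw [PTree.leaves_node] at *
      refine ⟨.node L₁ (.node L₂ R), p + L₁.leaves,
        p + L₁.leaves + L₂.leaves + R.leaves, .base L₁ L₂ R, by omega, ?_, ?_, ?_, ?_⟩
      · intro hmem
        rcases mem_dual_RR.1 hmem with h | h | h | ⟨h, _⟩ | ⟨h, _⟩ | ⟨h, _⟩ | h
        · exact absurd (mem_dualAux_bounds' (by omega) h) (by omega)
        · exact absurd (mem_dualAux_bounds' (by omega) h) (by omega)
        · exact absurd (mem_dualAux_bounds' (by omega) h) (by omega)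
        · rw [sym2_nat_eq (by omega) (by omega)] at h; omega
        · rw [sym2_nat_eq (by omega) (by omega)] at h; omega
        · rw [sym2_nat_eq (by omega) (by omega)] at h; omega
        · rw [sym2_nat_eq (by omega) (by omega)] at h; omega
      · exact mem_dual_RR.2 (by tauto)
      · intro hmem
        rcases mem_dual_LL.1 hmem with h | h | h | ⟨h, _⟩ | ⟨h, _⟩ | ⟨h, _⟩ | h
        · exact absurd (mem_dualAux_bounds' (by omega) h) (by omega)
        · exact absurd (mem_dualAux_bounds' (by omega) h) (by omega)
        · exact absurd (mem_dualAux_bounds' (by omega) h) (by omega)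
        · rw [sym2_nat_eq (by omega) (by omega)] at h; omega
        · rw [sym2_nat_eq (by omega) (by omega)] at h; omega
        · rw [sym2_nat_eq (by omega) (by omega)] at h; omega
        · rw [sym2_nat_eq (by omega) (by omega)] at h; omega
      · intro x y hax hxy hyn hnx hcompat
        simp only [PTree.leaves_node] at hyn
        have hx' : p < x ∧ x < p + (L₁.leaves + L₂.leaves) ∧
            p + (L₁.leaves + L₂.leaves) < y := by
          rcases hnx with ⟨h1, h2', h3⟩ | h1
          · omega
          · exact h1
        constructor
        · by_contra hc
          rcases Nat.lt_or_ge x (p + L₁.leaves) with hlt | hge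
          · have h2L1 : 2 ≤ L₁.leaves := by omega
            exact hcompat p (p + L₁.leaves) (by omega)
              (mem_dual_LL.2 (by tauto)) (by omega)
              (.inr ⟨by omega, by omega, by omega⟩)
          · have hgt : p + L₁.leaves < x := by omega
            have h2L2 : 2 ≤ L₂.leaves := by omega
            exact hcompat (p + L₁.leaves) (p + L₁.leaves + L₂.leaves) (by omega)
              (mem_dual_LL.2 (by tauto)) (by omega)
              (.inr ⟨by omega, by omega, by omega⟩)
        · by_contra hc
          have hlt : y < p + L₁.leaves + L₂.leaves + R.leaves := by omega
          have h2R : 2 ≤ R.leaves := by omega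
          exact hcompat (p + L₁.leaves + L₂.leaves)
            (p + L₁.leaves + L₂.leaves + R.leaves) (by omega)
            (mem_dual_LL.2 (by tauto)) (by omega)
            (.inl ⟨by omega, by omega, by omega⟩)
    · -- d is the right root diagonal (a + L.leaves, a + L.leaves + R.leaves)
      rw [sym2_nat_eq hpq (by omega)] at he
      obtain ⟨rfl, rfl⟩ := he
      obtain ⟨R₁, R₂, rfl⟩ := R.exists_node h2
      have m1 := R₁.leaves_pos; have m2 := R₂.leaves_pos
      rw [PTree.leaves_node] at *
      refine ⟨.node (.node L R₁) R₂, a, a + L.leaves + R₁.leaves,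
        .base' L R₁ R₂, by omega, ?_, ?_, ?_, ?_⟩
      · intro hmem
        rcases mem_dual_LL.1 hmem with h | h | h | ⟨h, _⟩ | ⟨h, _⟩ | ⟨h, _⟩ | h
        · exact absurd (mem_dualAux_bounds' (by omega) h) (by omega)
        · exact absurd (mem_dualAux_bounds' (by omega) h) (by omega)
        · exact absurd (mem_dualAux_bounds' (by omega) h) (by omega)
        · rw [sym2_nat_eq (by omega) (by omega)] at h; omega
        · rw [sym2_nat_eq (by omega) (by omega)] at h; omega
        · rw [sym2_nat_eq (by omega) (by omega)] at h; omega
        · rw [sym2_nat_eq (by omega) (by omega)] at h; omega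
      · exact mem_dual_LL.2 (by tauto)
      · intro hmem
        rcases mem_dual_RR.1 hmem with h | h | h | ⟨h, _⟩ | ⟨h, _⟩ | ⟨h, _⟩ | h
        · exact absurd (mem_dualAux_bounds' (by omega) h) (by omega)
        · exact absurd (mem_dualAux_bounds' (by omega) h) (by omega)
        · exact absurd (mem_dualAux_bounds' (by omega) h) (by omega)
        · rw [sym2_nat_eq (by omega) (by omega)] at h; omega
        · rw [sym2_nat_eq (by omega) (by omega)] at h; omega
        · rw [sym2_nat_eq (by omega) (by omega)] at h; omega
        · rw [sym2_nat_eq (by omega) (by omega)] at h; omega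
      · intro x y hax hxy hyn hnx hcompat
        simp only [PTree.leaves_node] at hyn
        have hx' : x < a + L.leaves ∧ a + L.leaves < y ∧
            y < a + L.leaves + (R₁.leaves + R₂.leaves) := by
          rcases hnx with h1 | ⟨h1, h2', h3⟩
          · omega
          · omega
        constructor
        · by_contra hc
          have hgt : a < x := by omega
          have h2L : 2 ≤ L.leaves := by omega
          exact hcompat a (a + L.leaves) (by omega)
            (mem_dual_RR.2 (by tauto)) (by omega)
            (.inr ⟨by omega, by omega, by omega⟩)
        · by_contra hc
          rcases Nat.lt_or_ge y (a + L.leaves + R₁.leaves) with hlt | hge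
          · have h2R1 : 2 ≤ R₁.leaves := by omega
            exact hcompat (a + L.leaves) (a + L.leaves + R₁.leaves) (by omega)
              (mem_dual_RR.2 (by tauto)) (by omega)
              (.inl ⟨by omega, by omega, by omega⟩)
          · have hgt : a + L.leaves + R₁.leaves < y := by omega
            have h2R2 : 2 ≤ R₂.leaves := by omega
            exact hcompat (a + L.leaves + R₁.leaves)
              (a + L.leaves + R₁.leaves + R₂.leaves) (by omega)
              (mem_dual_RR.2 (by tauto)) (by omega)
              (.inl ⟨by omega, by omega, by omega⟩)

lemma dual_inj_aux {A B A' B' : PTree} {a : ℕ}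
    (hleq : (PTree.node A B).leaves = (PTree.node A' B').leaves)
    (hiff : ∀ f, f ∈ (PTree.node A B).dualAux a ↔ f ∈ (PTree.node A' B').dualAux a)
    (hlt : A.leaves < A'.leaves) : False := by
  have h1 := A.leaves_pos; have h2 := B.leaves_pos
  have h3 := A'.leaves_pos; have h4 := B'.leaves_pos
  simp only [PTree.leaves_node] at hleq
  have h2A' : 2 ≤ A'.leaves := by omega
  have hmem : s(a, a + A'.leaves) ∈ (PTree.node A B).dualAux a :=
    (hiff _).2 (dualAux_node_mem.2 (.inr (.inr (.inl ⟨rfl, h2A'⟩))))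
  rcases dualAux_node_mem.1 hmem with h | h | ⟨h, _⟩ | ⟨h, _⟩
  · exact absurd (mem_dualAux_bounds' (by omega) h) (by omega)
  · exact absurd (mem_dualAux_bounds' (by omega) h) (by omega)
  · rw [sym2_nat_eq (by omega) (by omega)] at h; omega
  · rw [sym2_nat_eq (by omega) (by omega)] at h; omega

lemma dual_inj {P : PTree} : ∀ {Q : PTree} {a : ℕ}, P.leaves = Q.leaves →
    (∀ f, f ∈ P.dualAux a ↔ f ∈ Q.dualAux a) → P = Q := by
  induction P with
  | leaf => intro Q a hl _; exact (Q.eq_leaf (by simpa [PTree.leaves] using hl.symm)).symm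
  | node L R ihL ihR =>
    intro Q a hl hiff
    have h1 := L.leaves_pos; have h2 := R.leaves_pos
    obtain ⟨L', R', rfl⟩ := Q.exists_node (by simp only [PTree.leaves_node] at hl ⊢; omega)
    have h3 := L'.leaves_pos; have h4 := R'.leaves_pos
    have hk : L.leaves = L'.leaves := by
      rcases Nat.lt_trichotomy L.leaves L'.leaves with h | h | h
      · exact absurd (dual_inj_aux hl hiff h) id
      · exact h
      · exact absurd (dual_inj_aux hl.symm (fun f => (hiff f).symm) h) id
    simp only [PTree.leaves_node] at hl
    have hiffL : ∀ f, f ∈ L.dualAux a ↔ f ∈ L'.dualAux a := by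
      have key : ∀ (X Y X' Y' : PTree), X.leaves = X'.leaves →
          X.leaves + Y.leaves = X'.leaves + Y'.leaves →
          (∀ f, f ∈ (PTree.node X Y).dualAux a ↔ f ∈ (PTree.node X' Y').dualAux a) →
          ∀ f, f ∈ X.dualAux a → f ∈ X'.dualAux a := by
        intro X Y X' Y' hX hXY hif f hf
        obtain ⟨p, q, rfl, hb1, hb2, hb3, hb4⟩ := PTree.mem_dualAux_bounds hf
        have hXp := X.leaves_pos; have hYp := Y.leaves_pos
        have hf2 : s(p,q) ∈ (PTree.node X' Y').dualAux a :=
          (hif _).1 (dualAux_node_mem.2 (.inl hf))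
        rcases dualAux_node_mem.1 hf2 with h | h | ⟨h, _⟩ | ⟨h, _⟩
        · exact h
        · exact absurd (mem_dualAux_bounds' (by omega) h) (by omega)
        · rw [sym2_nat_eq (by omega) (by omega)] at h; omega
        · rw [sym2_nat_eq (by omega) (by omega)] at h
          have := Y'.leaves_pos; omega
      exact fun f => ⟨key L R L' R' hk hl hiff f,
        key L' R' L R hk.symm hl.symm (fun f => (hiff f).symm) f⟩
    have hiffR : ∀ f, f ∈ R.dualAux (a + L.leaves) ↔ f ∈ R'.dualAux (a + L.leaves) := by
      have key : ∀ (X Y X' Y' : PTree), X.leaves = X'.leaves →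
          X.leaves + Y.leaves = X'.leaves + Y'.leaves →
          (∀ f, f ∈ (PTree.node X Y).dualAux a ↔ f ∈ (PTree.node X' Y').dualAux a) →
          ∀ f, f ∈ Y.dualAux (a + X.leaves) → f ∈ Y'.dualAux (a + X.leaves) := by
        intro X Y X' Y' hX hXY hif f hf
        obtain ⟨p, q, rfl, hb1, hb2, hb3, hb4⟩ := PTree.mem_dualAux_bounds hf
        have hXp := X.leaves_pos; have hYp := Y.leaves_pos
        have hf2 : s(p,q) ∈ (PTree.node X' Y').dualAux a :=
          (hif _).1 (dualAux_node_mem.2 (.inr (.inl hf)))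
        rcases dualAux_node_mem.1 hf2 with h | h | ⟨h, _⟩ | ⟨h, _⟩
        · exact absurd (mem_dualAux_bounds' (by omega) h) (by omega)
        · rwa [← hX] at h
        · rw [sym2_nat_eq (by omega) (by omega)] at h; omega
        · rw [sym2_nat_eq (by omega) (by omega)] at h; omega
      refine fun f => ⟨key L R L' R' hk hl hiff f, ?_⟩
      intro hf
      have := key L' R' L R hk.symm hl.symm (fun f => (hiff f).symm) f
      rw [← hk] at this
      exact this hf
    rw [ihL hk hiffL, ihR (by omega) hiffR]

lemma irred_iff_disjoint {P Q : PTree} (h : P.leaves = Q.leaves) :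
    IrredLayout (P, Q) ↔ ∀ f, f ∈ P.dual → f ∉ Q.dual := by
  constructor
  · intro hirr f hfP hfQ
    obtain ⟨b, u, hsu, h2u, hltu, rfl⟩ := PTree.mem_dualAux_interval.1 hfP
    obtain ⟨c, v, hsv, h2v, hltv, he⟩ := PTree.mem_dualAux_interval.1 hfQ
    rw [sym2_nat_eq (by omega) (by omega)] at he
    have hbc : b = c := by omega
    have hlv : u.leaves = v.leaves := by omega
    subst hbc
    exact hirr ⟨b, u, v, hsu, hsv, hlv, h2u, hltu⟩
  · rintro hdisj ⟨b, u, v, hsu, hsv, hlv, h2u, hltu⟩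
    have hltu' : u.leaves < P.leaves := hltu
    have hfP : s(0 + b, 0 + b + u.leaves) ∈ P.dual :=
      PTree.mem_dualAux_interval.2 ⟨b, u, hsu, h2u, hltu', rfl⟩
    have hfQ : s(0 + b, 0 + b + v.leaves) ∈ Q.dual :=
      PTree.mem_dualAux_interval.2 ⟨b, v, hsv, by omega, by omega, rfl⟩
    rw [← hlv] at hfQ
    exact hdisj _ hfP hfQ

def toFin (n : ℕ) (x : ℕ) : Fin (n+1) := ⟨x % (n+1), Nat.mod_lt _ n.succ_pos⟩

lemma toFin_val {n x : ℕ} (h : x ≤ n) : (toFin n x).val = x := Nat.mod_eq_of_lt (by omega)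

def liftS (n : ℕ) (S : Finset (Sym2 ℕ)) : Finset (Sym2 (Fin (n+1))) :=
  S.image (Sym2.map (toFin n))

lemma lift_eq_iff {n u v x y : ℕ} (hu : u ≤ n) (hv : v ≤ n) (hx : x ≤ n) (hy : y ≤ n) :
    s(toFin n u, toFin n v) = s(toFin n x, toFin n y) ↔ s(u,v) = s(x,y) := by
  rw [Sym2.eq_iff, Sym2.eq_iff]
  constructor
  · rintro (⟨h1, h2⟩ | ⟨h1, h2⟩)
    · exact .inl ⟨by rw [← toFin_val hu, ← toFin_val hx, h1],
        by rw [← toFin_val hv, ← toFin_val hy, h2]⟩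
    · exact .inr ⟨by rw [← toFin_val hu, ← toFin_val hy, h1],
        by rw [← toFin_val hv, ← toFin_val hx, h2]⟩
  · rintro (⟨rfl, rfl⟩ | ⟨rfl, rfl⟩)
    · exact .inl ⟨rfl, rfl⟩
    · exact .inr ⟨rfl, rfl⟩

lemma mem_liftS {n : ℕ} {S : Finset (Sym2 ℕ)} (hB : ∀ d ∈ S, ∀ z ∈ d, z ≤ n)
    {x y : ℕ} (hx : x ≤ n) (hy : y ≤ n) :
    s(toFin n x, toFin n y) ∈ liftS n S ↔ s(x,y) ∈ S := by
  constructor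
  · intro h
    obtain ⟨d, hd, he⟩ := Finset.mem_image.1 h
    induction d using Sym2.ind with
    | _ u v =>
      rw [Sym2.map_pair_eq] at he
      have hu : u ≤ n := hB _ hd u (by simp)
      have hv : v ≤ n := hB _ hd v (by simp)
      rw [lift_eq_iff hu hv hx hy] at he
      rwa [← he]
  · intro h
    exact Finset.mem_image.2 ⟨s(x,y), h, by rw [Sym2.map_pair_eq]⟩

lemma dual_bdd {n : ℕ} {P : PTree} (h : P.leaves = n) :
    ∀ d ∈ P.dual, ∀ z ∈ d, z ≤ n := by
  intro d hd z hz
  obtain ⟨p, q, rfl, h1, h2, h3, h4⟩ := PTree.mem_dualAux_bounds hd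
  rcases Sym2.mem_iff.1 hz with rfl | rfl <;> omega

lemma liftS_elem {n : ℕ} {P : PTree} (h : P.leaves = n) {t : Sym2 (Fin (n+1))}
    (ht : t ∈ liftS n P.dual) :
    ∃ p q, p + 2 ≤ q ∧ q ≤ n ∧ ¬(p = 0 ∧ q = n) ∧ s(p,q) ∈ P.dual ∧
      t = s(toFin n p, toFin n q) := by
  obtain ⟨d, hd, he⟩ := Finset.mem_image.1 ht
  obtain ⟨p, q, rfl, h1, h2, h3, h4⟩ := PTree.mem_dualAux_bounds hd
  rw [Sym2.map_pair_eq] at he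
  exact ⟨p, q, by omega, by omega, by omega, hd, he.symm⟩

lemma crosses_symm {n : ℕ} {d e : Sym2 (Fin n)} : Crosses n d e ↔ Crosses n e d := by
  unfold Crosses; exact or_comm

lemma crosses_elim {n p q x y : ℕ} (hpq : p < q) (hxy : x < y)
    (hp : p ≤ n) (hq : q ≤ n) (hx : x ≤ n) (hy : y ≤ n)
    (h : Crosses (n+1) s(toFin n p, toFin n q) s(toFin n x, toFin n y)) :
    NX p q x y ∨ NX x y p q := by
  rcases h with ⟨a, b, c, c', e1, e2, l1, l2, l3⟩ | ⟨a, b, c, c', e1, e2, l1, l2, l3⟩ <;>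
  · rw [Sym2.eq_iff] at e1 e2
    unfold NX
    rcases e1 with ⟨rfl, rfl⟩ | ⟨rfl, rfl⟩ <;> rcases e2 with ⟨rfl, rfl⟩ | ⟨rfl, rfl⟩ <;>
    · simp only [Fin.lt_def, toFin_val hp, toFin_val hq, toFin_val hx, toFin_val hy]
        at l1 l2 l3
      omega

lemma crosses_intro {n : ℕ} {α β γ δ : Fin (n+1)} (h : NX γ.val δ.val α.val β.val) :
    Crosses (n+1) s(α,β) s(γ,δ) := by
  rcases h with ⟨h1, h2, h3⟩ | ⟨h1, h2, h3⟩
  · exact .inr ⟨γ, δ, α, β, rfl, rfl, Fin.lt_def.2 h1, Fin.lt_def.2 h2, Fin.lt_def.2 h3⟩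
  · exact .inl ⟨α, β, γ, δ, rfl, rfl, Fin.lt_def.2 h1, Fin.lt_def.2 h2, Fin.lt_def.2 h3⟩

lemma crosses_intro' {n : ℕ} {α β γ δ : Fin (n+1)} (h : NX α.val β.val γ.val δ.val) :
    Crosses (n+1) s(α,β) s(γ,δ) := crosses_symm.2 (crosses_intro h)

lemma isDiag_intro {n x y : ℕ} (h2 : x + 2 ≤ y) (hy : y ≤ n) (hne : ¬(x = 0 ∧ y = n)) :
    IsDiag (n+1) s(toFin n x, toFin n y) := by
  have hx : x ≤ n := by omega
  refine ⟨toFin n x, toFin n y, rfl, ?_, ?_, ?_⟩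
  · intro hc
    have := congrArg Fin.val hc
    rw [toFin_val hx, toFin_val hy] at this; omega
  · rw [toFin_val hx, toFin_val hy]
    rw [Nat.mod_eq_of_lt (by omega)]; omega
  · rw [toFin_val hx, toFin_val hy]
    rcases Nat.lt_or_ge y n with hlt | hge
    · rw [Nat.mod_eq_of_lt (by omega)]; omega
    · have : y = n := by omega
      subst this
      rw [Nat.mod_self]; omega

lemma isDiag_elim {n : ℕ} {d : Sym2 (Fin (n+1))} (h : IsDiag (n+1) d) :
    ∃ x y : ℕ, x + 2 ≤ y ∧ y ≤ n ∧ ¬(x = 0 ∧ y = n) ∧ d = s(toFin n x, toFin n y) := by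
  obtain ⟨a, b, rfl, hne, h1, h2⟩ := h
  have ha : a.val ≤ n := by omega
  have hb : b.val ≤ n := by omega
  have hfa : toFin n a.val = a := Fin.ext (toFin_val ha)
  have hfb : toFin n b.val = b := Fin.ext (toFin_val hb)
  have hne' : a.val ≠ b.val := fun hc => hne (Fin.ext hc)
  rcases Nat.lt_or_ge a.val b.val with hab | hab
  · refine ⟨a.val, b.val, ?_, hb, ?_, by rw [hfa, hfb]⟩
    · rcases Nat.lt_or_ge (a.val + 1) (n+1) with hlt | hge
      · rw [Nat.mod_eq_of_lt hlt] at h1; omega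
      · omega
    · rintro ⟨hx0, hyn⟩
      rw [hyn] at h2
      rw [Nat.mod_self] at h2
      exact h2 hx0.symm
  · have hab' : b.val < a.val := by omega
    refine ⟨b.val, a.val, ?_, ha, ?_, by rw [hfa, hfb, Sym2.eq_swap]⟩
    · rcases Nat.lt_or_ge (b.val + 1) (n+1) with hlt | hge
      · rw [Nat.mod_eq_of_lt hlt] at h2; omega
      · omega
    · rintro ⟨hx0, hyn⟩
      rw [hyn] at h1
      rw [Nat.mod_self] at h1
      exact h1 hx0.symm

lemma Triangulation.ext' {n : ℕ} {T T' : Triangulation n} (h : T.diags = T'.diags) :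
    T = T' := by
  cases T; cases T'
  simp only at h
  subst h
  rfl

def dualT {n : ℕ} (P : PTree) (h : P.leaves = n) : Triangulation (n+1) where
  diags := liftS n P.dual
  isDiag := by
    intro d hd
    obtain ⟨p, q, h1, h2, h3, _, rfl⟩ := liftS_elem h hd
    exact isDiag_intro h1 h2 h3
  noncross := by
    intro d hd e he hc
    obtain ⟨p, q, h1, h2, h3, hmem, rfl⟩ := liftS_elem h hd
    obtain ⟨x, y, g1, g2, g3, hmem2, rfl⟩ := liftS_elem h he
    rcases crosses_elim (by omega) (by omega) (by omega) (by omega) (by omega) (by omega) hc with hnx | hnx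
    · exact dual_noncross (by omega : x < y) (by omega : p < q) hmem2 hmem hnx
    · exact dual_noncross (by omega : p < q) (by omega : x < y) hmem hmem2 hnx
  maximal := by
    intro d hdiag hnc
    obtain ⟨x, y, h1, h2, h3, rfl⟩ := isDiag_elim hdiag
    have hmem : s(x,y) ∈ P.dual := by
      refine dual_maximal P 0 x y (by omega) h1 (by omega) (by simpa [h] using h3) ?_
      intro u v huv hmem hnx
      have hub := dual_bdd h _ hmem u (by simp)
      have hvb := dual_bdd h _ hmem v (by simp)
      refine hnc _ ((mem_liftS (dual_bdd h) hub hvb).2 hmem) ?_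
      refine crosses_intro' ?_
      rw [toFin_val (by omega), toFin_val (by omega), toFin_val hub, toFin_val hvb]
      exact hnx
    exact (mem_liftS (dual_bdd h) (by omega) (by omega)).2 hmem

lemma build_tree (n : ℕ) (S : Finset (Sym2 ℕ))
    (Hd : ∀ f ∈ S, ∃ p q, f = s(p,q) ∧ p + 2 ≤ q ∧ q ≤ n ∧ ¬(p = 0 ∧ q = n))
    (Hnc : ∀ p q x y, p < q → x < y → s(p,q) ∈ S → s(x,y) ∈ S → ¬ NX x y p q)
    (Hmax : ∀ p q, p + 2 ≤ q → q ≤ n → ¬(p = 0 ∧ q = n) →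
      (∀ u v, u < v → s(u,v) ∈ S → ¬ NX p q u v) → s(p,q) ∈ S) :
    ∀ m, 1 ≤ m → ∀ a, a + m ≤ n → (m = 1 ∨ s(a, a+m) ∈ S ∨ (a = 0 ∧ m = n)) →
      ∃ P : PTree, P.leaves = m ∧ ∀ f, f ∈ P.dualAux a ↔
        (f ∈ S ∧ ∃ p q, f = s(p,q) ∧ a ≤ p ∧ p < q ∧ q ≤ a + m ∧ ¬(p = a ∧ q = a + m)) := by
  intro m
  induction m using Nat.strong_induction_on with
  | _ m ih =>
    intro h1 a ham hcond
    by_cases hm1 : m = 1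
    · subst hm1
      refine ⟨.leaf, rfl, ?_⟩
      intro f
      simp only [PTree.dualAux, Finset.notMem_empty, false_iff]
      rintro ⟨hfS, p, q, rfl, hb1, hb2, hb3, hb4⟩
      obtain ⟨p0, q0, he, hc1, hc2, hc3⟩ := Hd _ hfS
      rw [sym2_nat_eq hb2 (by omega)] at he
      omega
    · have hm2 : 2 ≤ m := by omega
      -- boundary fact
      have Bnd : ∀ u v, u < v → s(u,v) ∈ S →
          ¬(u < a ∧ a < v ∧ v < a + m) ∧ ¬(a < u ∧ u < a + m ∧ a + m < v) := by
        intro u v huv hmem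
        rcases hcond with h | h | ⟨rfl, rfl⟩
        · omega
        · constructor
          · intro hc; exact Hnc a (a+m) u v (by omega) huv h hmem (.inl hc)
          · intro hc; exact Hnc a (a+m) u v (by omega) huv h hmem (.inr hc)
        · obtain ⟨p0, q0, he, hc1, hc2, hc3⟩ := Hd _ hmem
          rw [sym2_nat_eq huv (by omega)] at he
          omega
      have hex : ∃ k, a+1 ≤ k ∧ k < a+m ∧ (k = a+1 ∨ s(a,k) ∈ S) ∧
          ∀ j, a+1 ≤ j → j < a+m → s(a,j) ∈ S → j ≤ k := by
        have hne : ((Finset.range (a+m)).filter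
            (fun k => a+1 ≤ k ∧ (k = a+1 ∨ s(a,k) ∈ S))).Nonempty :=
          ⟨a+1, by
            simp only [Finset.mem_filter, Finset.mem_range]
            exact ⟨by omega, le_refl _, Or.inl trivial⟩⟩
        have hmem := Finset.max'_mem _ hne
        simp only [Finset.mem_filter, Finset.mem_range] at hmem
        refine ⟨_, hmem.2.1, hmem.1, hmem.2.2, ?_⟩
        intro j hj1 hj2 hj3
        refine Finset.le_max' _ j ?_
        simp only [Finset.mem_filter, Finset.mem_range]
        exact ⟨hj2, hj1, .inr hj3⟩
      obtain ⟨k, hk2, hk1, hk3, hkmax⟩ := hex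
      have hkb : k = a + m - 1 ∨ s(k, a+m) ∈ S := by
        by_cases hc : k = a + m - 1
        · exact .inl hc
        · refine .inr (Hmax k (a+m) (by omega) (by omega) (by omega) ?_)
          intro u v huv hmem hnx
          have hB := Bnd u v huv hmem
          rcases hnx with ⟨g1, g2, g3⟩ | ⟨g1, g2, g3⟩
          · exact hB.2 ⟨by omega, by omega, by omega⟩
          · -- u < k ∧ k < v ∧ v < a + m
            have hua : a ≤ u := by
              by_contra hua
              exact hB.1 ⟨by omega, by omega, by omega⟩
            rcases Nat.eq_or_lt_of_le hua with rfl | hua'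
            · exact absurd (hkmax v (by omega) (by omega) hmem) (by omega)
            · rcases hk3 with rfl | hak
              · omega
              · exact Hnc a k u v (by omega) huv hak hmem (.inr ⟨by omega, by omega, by omega⟩)
      -- recurse
      have hrec1 := ih (k - a) (by omega) (by omega) a (by omega)
      have hrec2 := ih (a + m - k) (by omega) (by omega) k (by omega)
      have hc1 : k - a = 1 ∨ s(a, a + (k-a)) ∈ S ∨ (a = 0 ∧ k - a = n) := by
        rcases hk3 with rfl | hak
        · exact .inl (by omega)
        · refine .inr (.inl ?_)
          rw [show a + (k-a) = k by omega]
          exact hak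
      have hc2 : a + m - k = 1 ∨ s(k, k + (a + m - k)) ∈ S ∨ (k = 0 ∧ a + m - k = n) := by
        rcases hkb with h | h
        · exact .inl (by omega)
        · refine .inr (.inl ?_)
          rw [show k + (a + m - k) = a + m by omega]
          exact h
      obtain ⟨P₁, hP₁l, hP₁⟩ := hrec1 hc1
      obtain ⟨P₂, hP₂l, hP₂⟩ := hrec2 hc2
      refine ⟨.node P₁ P₂, by rw [PTree.leaves_node]; omega, ?_⟩
      intro f
      rw [dualAux_node_mem, hP₁l, show a + (k - a) = k by omega]
      constructor
      · rintro (h | h | ⟨rfl, h2⟩ | ⟨rfl, h2⟩)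
        · obtain ⟨hfS, p, q, rfl, g1, g2, g3, g4⟩ := (hP₁ f).1 h
          exact ⟨hfS, p, q, rfl, by omega, g2, by omega, by omega⟩
        · obtain ⟨hfS, p, q, rfl, g1, g2, g3, g4⟩ := (hP₂ f).1 h
          exact ⟨hfS, p, q, rfl, by omega, g2, by omega, by omega⟩
        · have hkS : s(a, k) ∈ S := by
            rcases hc1 with h | h | h
            · omega
            · rwa [show a + (k-a) = k by omega] at h
            · omega
          exact ⟨hkS, a, k, rfl, by omega, by omega, by omega, by omega⟩
        · rw [hP₂l, show k + (a + m - k) = a + m by omega]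
          have hkS : s(k, a + m) ∈ S := by
            rcases hkb with h | h
            · rw [hP₂l] at h2; omega
            · exact h
          exact ⟨hkS, k, a + m, rfl, by omega, by omega, by omega, by omega⟩
      · rintro ⟨hfS, p, q, rfl, g1, g2, g3, g4⟩
        have hord : p + 2 ≤ q := by
          obtain ⟨p0, q0, he, hc1', hc2', hc3'⟩ := Hd _ hfS
          rw [sym2_nat_eq g2 (by omega)] at he
          omega
        have hsplit : q ≤ k ∨ k ≤ p := by
          by_contra hc
          push_neg at hc
          obtain ⟨hq, hp⟩ := hc
          rcases Nat.eq_or_lt_of_le g1 with rfl | hpa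
          · exact absurd (hkmax q (by omega) (by omega) hfS) (by omega)
          · rcases hk3 with rfl | hak
            · omega
            · exact Hnc a k p q (by omega) g2 hak hfS (.inr ⟨by omega, by omega, by omega⟩)
        rcases hsplit with hq | hp
        · by_cases hroot : p = a ∧ q = k
          · refine .inr (.inr (.inl ?_))
            rw [hroot.1, hroot.2]
            exact ⟨rfl, by omega⟩
          · exact .inl ((hP₁ _).2 ⟨hfS, p, q, rfl, g1, g2, by omega, by omega⟩)
        · by_cases hroot : p = k ∧ q = a + m
          · refine .inr (.inr (.inr ?_))
            rw [hroot.1, hroot.2, hP₂l, show k + (a + m - k) = a + m by omega]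
            exact ⟨rfl, by omega⟩
          · refine .inr (.inl ((hP₂ _).2 ⟨hfS, p, q, rfl, hp, g2, ?_, ?_⟩))
            · omega
            · omega

lemma crosses_intro_nat {n p q x y : ℕ} (hp : p ≤ n) (hq : q ≤ n) (hx : x ≤ n) (hy : y ≤ n)
    (h : NX x y p q) : Crosses (n+1) s(toFin n p, toFin n q) s(toFin n x, toFin n y) := by
  refine crosses_intro ?_
  rwa [toFin_val hx, toFin_val hy, toFin_val hp, toFin_val hq]

lemma NX_symm {x y p q : ℕ} : NX x y p q ↔ NX p q x y := by unfold NX; omega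

lemma rot_flip_of {P P' : PTree} (hrot : Rot P P') {p q : ℕ} (hpq : p < q)
    (h1 : s(p,q) ∈ P.dual) (h2 : s(p,q) ∉ P'.dual) :
    ∃ p' q', p' < q' ∧ s(p',q') ∈ P'.dual ∧ s(p',q') ∉ P.dual ∧
      ∀ e, e ≠ s(p,q) → e ≠ s(p',q') → (e ∈ P.dual ↔ e ∈ P'.dual) := by
  obtain ⟨p0, q0, p0', q0', hpq0, hpq0', hm1, hm2, hm3, hm4, hiff⟩ := rot_flip hrot 0
  have hid : s(p,q) = s(p0,q0) := by
    by_contra hne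
    by_cases hne' : s(p,q) = s(p0',q0')
    · rw [hne'] at h1; exact hm2 h1
    · exact h2 ((hiff _ hne hne').1 h1)
  refine ⟨p0', q0', hpq0', hm4, hm2, ?_⟩
  intro e he1 he2
  exact hiff e (by rwa [← hid]) he2

lemma irred_swap {P Q : PTree} (h : P.leaves = Q.leaves) :
    IrredLayout (P, Q) ↔ IrredLayout (Q, P) := by
  rw [irred_iff_disjoint h, irred_iff_disjoint h.symm]
  constructor <;> exact fun hd f hf hg => hd f hg hf

lemma liftS_disj_iff {n : ℕ} {P Q : PTree} (hP : P.leaves = n) (hQ : Q.leaves = n) :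
    Disjoint (liftS n P.dual) (liftS n Q.dual) ↔ ∀ f ∈ P.dual, f ∉ Q.dual := by
  rw [Finset.disjoint_left]
  constructor
  · intro h f hf hfQ
    obtain ⟨p, q, rfl, h1, h2, h3, h4⟩ := PTree.mem_dualAux_bounds hf
    rw [hP] at h3
    exact h ((mem_liftS (dual_bdd hP) (by omega) (by omega)).2 hf)
      ((mem_liftS (dual_bdd hQ) (by omega) (by omega)).2 hfQ)
  · intro h t ht htQ
    obtain ⟨p, q, h1, h2, h3, hmem, rfl⟩ := liftS_elem hP ht
    exact h _ hmem ((mem_liftS (dual_bdd hQ) (by omega) (by omega)).1 htQ)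

lemma dualT_inj {n : ℕ} {P Q : PTree} (hP : P.leaves = n) (hQ : Q.leaves = n)
    (h : liftS n P.dual = liftS n Q.dual) : P = Q := by
  refine dual_inj (a := 0) (hP.trans hQ.symm) ?_
  intro f
  constructor
  · intro hf
    obtain ⟨p, q, rfl, h1, h2, h3, h4⟩ := PTree.mem_dualAux_bounds hf
    rw [hP] at h3
    have := (mem_liftS (dual_bdd hP) (by omega) (by omega)).2 hf
    rw [h] at this
    exact (mem_liftS (dual_bdd hQ) (by omega) (by omega)).1 this
  · intro hf
    obtain ⟨p, q, rfl, h1, h2, h3, h4⟩ := PTree.mem_dualAux_bounds hf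
    rw [hQ] at h3
    have := (mem_liftS (dual_bdd hQ) (by omega) (by omega)).2 hf
    rw [← h] at this
    exact (mem_liftS (dual_bdd hP) (by omega) (by omega)).1 this

lemma rot_isFlip {n : ℕ} {P P' : PTree} (hP : P.leaves = n) (hP' : P'.leaves = n)
    (hrot : Rot P P') :
    ∃ p q p' q', p < q ∧ q ≤ n ∧ p' < q' ∧ q' ≤ n ∧
      s(p,q) ∈ P.dual ∧ s(p,q) ∉ P'.dual ∧ s(p',q') ∈ P'.dual ∧ s(p',q') ∉ P.dual ∧
      IsFlip (dualT P hP) s(toFin n p, toFin n q) (dualT P' hP') ∧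
      NewDiag (dualT P hP) (dualT P' hP') s(toFin n p', toFin n q') ∧
      ∀ e, e ≠ s(p,q) → e ≠ s(p',q') → (e ∈ P.dual ↔ e ∈ P'.dual) := by
  obtain ⟨p, q, p', q', hpq, hpq', hm1, hm2, hm3, hm4, hiff⟩ := rot_flip hrot 0
  have hb1 := mem_dualAux_bounds' hpq hm1
  have hb2 := mem_dualAux_bounds' hpq' hm4
  rw [hP] at hb1; rw [hP'] at hb2
  refine ⟨p, q, p', q', hpq, by omega, hpq', by omega, hm1, hm3, hm4, hm2, ?_, ?_, hiff⟩
  · refine ⟨(mem_liftS (dual_bdd hP) (by omega) (by omega)).2 hm1, ?_, ?_⟩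
    · intro hc
      exact hm3 ((mem_liftS (dual_bdd hP') (by omega) (by omega)).1 hc)
    · intro e he hne
      obtain ⟨u, v, g1, g2, g3, hmem, rfl⟩ := liftS_elem hP he
      have huv : s(u,v) ≠ s(p,q) := by
        intro hc
        exact hne ((lift_eq_iff (by omega) (by omega) (by omega) (by omega)).2 hc)
      have huv' : s(u,v) ≠ s(p',q') := by
        intro hc
        rw [hc] at hmem
        exact hm2 hmem
      exact (mem_liftS (dual_bdd hP') (by omega) (by omega)).2
        ((hiff _ huv huv').1 hmem)
  · refine ⟨(mem_liftS (dual_bdd hP') (by omega) (by omega)).2 hm4, ?_⟩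
    intro hc
    exact hm2 ((mem_liftS (dual_bdd hP) (by omega) (by omega)).1 hc)

lemma dualT_surj {n : ℕ} (hn : 1 ≤ n) (T : Triangulation (n+1)) :
    ∃ (P : PTree) (h : P.leaves = n), dualT P h = T := by
  classical
  set S : Finset (Sym2 ℕ) := T.diags.image (Sym2.map (fun α : Fin (n+1) => α.val)) with hS
  have hSelem : ∀ f ∈ S, ∃ p q, f = s(p,q) ∧ p + 2 ≤ q ∧ q ≤ n ∧ ¬(p = 0 ∧ q = n) := by
    intro f hf
    obtain ⟨t, ht, rfl⟩ := Finset.mem_image.1 hf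
    obtain ⟨x, y, g1, g2, g3, rfl⟩ := isDiag_elim (T.isDiag t ht)
    rw [Sym2.map_pair_eq, toFin_val (by omega), toFin_val g2]
    exact ⟨x, y, rfl, g1, g2, g3⟩
  have hSmem : ∀ x y : ℕ, x ≤ n → y ≤ n →
      (s(x,y) ∈ S ↔ s(toFin n x, toFin n y) ∈ T.diags) := by
    intro x y hx hy
    constructor
    · intro h
      obtain ⟨t, ht, he⟩ := Finset.mem_image.1 h
      obtain ⟨u, v, g1, g2, g3, rfl⟩ := isDiag_elim (T.isDiag t ht)
      rw [Sym2.map_pair_eq, toFin_val (by omega), toFin_val g2] at he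
      rw [Sym2.eq_iff] at he
      rcases he with ⟨rfl, rfl⟩ | ⟨rfl, rfl⟩
      · exact ht
      · rwa [Sym2.eq_swap]
    · intro h
      refine Finset.mem_image.2 ⟨_, h, ?_⟩
      rw [Sym2.map_pair_eq, toFin_val hx, toFin_val hy]
  have Hnc : ∀ p q x y, p < q → x < y → s(p,q) ∈ S → s(x,y) ∈ S → ¬ NX x y p q := by
    intro p q x y hpq hxy h1 h2 hnx
    obtain ⟨p0, q0, he, g1, g2, g3⟩ := hSelem _ h1
    rw [sym2_nat_eq hpq (by omega)] at he
    obtain ⟨x0, y0, he2, f1, f2, f3⟩ := hSelem _ h2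
    rw [sym2_nat_eq hxy (by omega)] at he2
    refine T.noncross _ ((hSmem p q (by omega) (by omega)).1 h1)
      _ ((hSmem x y (by omega) (by omega)).1 h2) ?_
    exact crosses_intro_nat (by omega) (by omega) (by omega) (by omega) hnx
  have Hmax : ∀ p q, p + 2 ≤ q → q ≤ n → ¬(p = 0 ∧ q = n) →
      (∀ u v, u < v → s(u,v) ∈ S → ¬ NX p q u v) → s(p,q) ∈ S := by
    intro p q h1 h2 h3 hcompat
    refine (hSmem p q (by omega) h2).2 (T.maximal _ (isDiag_intro h1 h2 h3) ?_)
    intro e he hc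
    obtain ⟨u, v, g1, g2, g3, rfl⟩ := isDiag_elim (T.isDiag e he)
    have huvS : s(u,v) ∈ S := (hSmem u v (by omega) g2).2 he
    rcases crosses_elim (by omega) (by omega) (by omega) h2 (by omega) g2 hc with h | h
    · exact hcompat u v (by omega) huvS h
    · exact hcompat u v (by omega) huvS (NX_symm.1 h)
  obtain ⟨P, hPl, hPiff⟩ := build_tree n S hSelem Hnc Hmax n hn 0 (by omega)
    (.inr (.inr ⟨rfl, rfl⟩))
  have hdual : ∀ f, f ∈ P.dual ↔ f ∈ S := by
    intro f
    show f ∈ P.dualAux 0 ↔ f ∈ S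
    rw [hPiff f]
    constructor
    · exact fun h => h.1
    · intro h
      obtain ⟨p, q, rfl, g1, g2, g3⟩ := hSelem _ h
      exact ⟨h, p, q, rfl, by omega, by omega, by omega, by omega⟩
  refine ⟨P, hPl, Triangulation.ext' ?_⟩
  ext t
  simp only [dualT]
  constructor
  · intro ht
    obtain ⟨p, q, g1, g2, g3, hmem, rfl⟩ := liftS_elem hPl ht
    exact (hSmem p q (by omega) g2).1 ((hdual _).1 hmem)
  · intro ht
    obtain ⟨x, y, g1, g2, g3, rfl⟩ := isDiag_elim (T.isDiag t ht)
    refine (mem_liftS (dual_bdd hPl) (by omega) g2).2 ?_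
    exact (hdual _).2 ((hSmem x y (by omega) g2).2 ht)

lemma isFlip_unique {n : ℕ} {P : PTree} (hP : P.leaves = n) {p q : ℕ} (hpq : p < q)
    (hd : s(p,q) ∈ P.dual) {T' : Triangulation (n+1)}
    (hflip : IsFlip (dualT P hP) s(toFin n p, toFin n q) T') :
    ∃ (P' : PTree) (hP' : P'.leaves = n), Rot P P' ∧ T' = dualT P' hP' ∧
      ∃ p' q', p' < q' ∧ q' ≤ n ∧ s(p',q') ∈ P'.dual ∧ s(p',q') ∉ P.dual ∧
        NewDiag (dualT P hP) T' s(toFin n p', toFin n q') := by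
  obtain ⟨P', p', q', hrot, hpq', hnm1, hm4, hm5, huniq⟩ := flip_exists_main hpq hd
  have hP' : P'.leaves = n := hrot.leaves_eq.symm.trans hP
  obtain ⟨p2', q2', hpq2', hm4', hm5', hiff0⟩ := rot_flip_of hrot hpq hd hnm1
  have hident : s(p',q') = s(p2',q2') := by
    by_contra hne
    have hne2 : s(p',q') ≠ s(p,q) := fun hc => hnm1 (hc ▸ hm4)
    exact hm5 ((hiff0 _ hne2 hne).2 hm4)
  have hiff : ∀ e, e ≠ s(p,q) → e ≠ s(p',q') → (e ∈ P.dual ↔ e ∈ P'.dual) :=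
    fun e h1 h2 => hiff0 e h1 (hident ▸ h2)
  have hbd := mem_dualAux_bounds' hpq hd
  have hbd' := mem_dualAux_bounds' hpq' hm4
  rw [hP] at hbd; rw [hP'] at hbd'
  have hsub1 : ∀ t ∈ T'.diags, t ∈ liftS n P'.dual := by
    intro t ht
    obtain ⟨x, y, g1, g2, g3, rfl⟩ := isDiag_elim (T'.isDiag t ht)
    by_cases hmem : s(x,y) ∈ P.dual
    · have hne : s(x,y) ≠ s(p,q) := by
        intro hc
        exact hflip.2.1
          (((lift_eq_iff (by omega) g2 (by omega) (by omega)).2 hc) ▸ ht)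
      have hne' : s(x,y) ≠ s(p',q') := fun hc => hm5 (hc ▸ hmem)
      exact (mem_liftS (dual_bdd hP') (by omega) g2).2 ((hiff _ hne hne').1 hmem)
    · have hcompat : ∀ u v, u < v → s(u,v) ∈ P.dual → ¬(u = p ∧ v = q) →
          ¬ NX x y u v := by
        intro u v huv hm hne hnx2
        have hbu := mem_dualAux_bounds' huv hm
        rw [hP] at hbu
        have humem : s(toFin n u, toFin n v) ∈ (dualT P hP).diags :=
          (mem_liftS (dual_bdd hP) (by omega) (by omega)).2 hm
        have hnel : s(toFin n u, toFin n v) ≠ s(toFin n p, toFin n q) := by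
          intro hcc
          rw [lift_eq_iff (by omega) (by omega) (by omega) (by omega),
            sym2_nat_eq huv hpq] at hcc
          exact hne hcc
        have heT' := hflip.2.2 _ humem hnel
        exact T'.noncross _ ht _ heT'
          (crosses_intro_nat (by omega) g2 (by omega) (by omega) (NX_symm.1 hnx2))
      have hnx : NX x y p q := by
        by_contra hnnx
        refine hmem (dual_maximal P 0 x y (by omega) g1 (by omega) (by omega) ?_)
        intro u v huv hm
        by_cases hc : u = p ∧ v = q
        · rw [hc.1, hc.2]; exact hnnx
        · exact hcompat u v huv hm hc
      obtain ⟨rfl, rfl⟩ := huniq x y (by omega) (by omega) (by omega) hnx hcompat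
      exact (mem_liftS (dual_bdd hP') (by omega) g2).2 hm4
  have hsub2 : ∀ t ∈ liftS n P'.dual, t ∈ T'.diags := by
    intro t ht
    obtain ⟨u, v, g1, g2, g3, hmem, rfl⟩ := liftS_elem hP' ht
    by_cases hc : s(u,v) = s(p',q')
    · refine T'.maximal _ (isDiag_intro g1 g2 g3) ?_
      intro e he
      exact (dualT P' hP').noncross _ ht _ (hsub1 e he)
    · have hne2 : s(u,v) ≠ s(p,q) := fun hcc => hnm1 (hcc ▸ hmem)
      have hPm := (hiff _ hne2 hc).2 hmem
      have hlm : s(toFin n u, toFin n v) ∈ (dualT P hP).diags :=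
        (mem_liftS (dual_bdd hP) (by omega) g2).2 hPm
      refine hflip.2.2 _ hlm ?_
      intro hcc
      rw [lift_eq_iff (by omega) g2 (by omega) (by omega)] at hcc
      exact hne2 hcc
  have hTeq : T' = dualT P' hP' := by
    refine Triangulation.ext' ?_
    ext t
    exact ⟨fun h => hsub1 t h, fun h => hsub2 t h⟩
  refine ⟨P', hP', hrot, hTeq, p', q', hpq', by omega, hm4, hm5, ?_, ?_⟩
  · rw [hTeq]
    exact (mem_liftS (dual_bdd hP') (by omega) (by omega)).2 hm4
  · intro hc
    exact hm5 ((mem_liftS (dual_bdd hP) (by omega) (by omega)).1 hc)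

lemma fst_iff {n : ℕ} {P1 P2 Q1 Q2 : PTree} (h11 : P1.leaves = n) (h12 : P2.leaves = n)
    (h21 : Q1.leaves = n) (h22 : Q2.leaves = n)
    (hirrP : IrredLayout (P1, P2)) (hirrQ : IrredLayout (Q1, Q2)) :
    LRelFst (P1,P2) (Q1,Q2) ↔
      PairFlipFst (dualT P1 h11, dualT P2 h12) (dualT Q1 h21, dualT Q2 h22) := by
  constructor
  · rintro ⟨P₁', hrot, hcase⟩
    have hP₁' : P₁'.leaves = n := hrot.leaves_eq.symm.trans h11
    obtain ⟨p, q, p', q', hpq, hqn, hpq', hq'n, hm1, hm2, hm3, hm4, hflip, hnew, hiff⟩ :=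
      rot_isFlip h11 hP₁' hrot
    refine ⟨s(toFin n p, toFin n q), dualT P₁' hP₁', s(toFin n p', toFin n q'),
      hflip, hnew, ?_⟩
    rcases hcase with ⟨hirrN, heq⟩ | ⟨hnirr, P₂', hrot2, hirr2, heq⟩
    · rw [Prod.mk.injEq] at heq
      obtain ⟨h1e, h2e⟩ := heq
      refine .inl ⟨?_, ?_⟩
      · have hdisj := (irred_iff_disjoint (by rw [hP₁', h12])).1 hirrN
        intro hc
        exact hdisj _ hm3 ((mem_liftS (dual_bdd h12) (by omega) (by omega)).1 hc)
      · subst h1e; subst h2e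
        exact Prod.ext_iff.2 ⟨Triangulation.ext' rfl, Triangulation.ext' rfl⟩
    · have hd'P2 : s(p',q') ∈ P2.dual := by
        by_contra hc
        apply hnirr
        rw [irred_iff_disjoint (by rw [hP₁', h12])]
        intro f hf hf2
        by_cases hfe : f = s(p',q')
        · exact hc (hfe ▸ hf2)
        · have hfe2 : f ≠ s(p,q) := fun hcc => hm2 (hcc ▸ hf)
          exact (irred_iff_disjoint (h11.trans h12.symm)).1 hirrP f
            ((hiff f hfe2 hfe).2 hf) hf2
      have hP₂' : P₂'.leaves = n := hrot2.leaves_eq.symm.trans h12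
      obtain ⟨e1, e2, e1', e2', hee, hen, hee', he'n, hn1, hn2, hn3, hn4,
        hflip2, hnew2, hiff2⟩ := rot_isFlip h12 hP₂' hrot2
      have hid : s(p',q') = s(e1,e2) := by
        by_contra hne
        have hd'P₂' : s(p',q') ∉ P₂'.dual := by
          intro hc
          exact (irred_iff_disjoint (by rw [hP₁', hP₂'])).1 hirr2 _ hm3 hc
        by_cases hne' : s(p',q') = s(e1',e2')
        · rw [hne'] at hd'P2; exact hn4 hd'P2
        · exact hd'P₂' ((hiff2 _ hne hne').1 hd'P2)
      obtain ⟨he1, he2⟩ := (sym2_nat_eq hpq' hee).1 hid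
      rw [← he1, ← he2] at hflip2
      rw [Prod.mk.injEq] at heq
      obtain ⟨h1e, h2e⟩ := heq
      refine .inr ⟨(mem_liftS (dual_bdd h12) (by omega) (by omega)).2 hd'P2,
        dualT P₂' hP₂', hflip2, ?_⟩
      subst h1e; subst h2e
      exact Prod.ext_iff.2 ⟨Triangulation.ext' rfl, Triangulation.ext' rfl⟩
  · rintro ⟨dF, T₁', d'F, hflip, hnew, hcase⟩
    obtain ⟨p, q, g1, g2, g3, hd, rfl⟩ := liftS_elem h11 hflip.1
    obtain ⟨P₁', hP₁', hrot, hTeq, x', y', hxy', hy'n, hnd1, hnd2, hnewd⟩ :=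
      isFlip_unique h11 (by omega) hd hflip
    subst hTeq
    obtain ⟨u, v, f1, f2, f3, hud, rfl⟩ := liftS_elem hP₁' hnew.1
    have huP1 : s(u,v) ∉ P1.dual := fun hc =>
      hnew.2 ((mem_liftS (dual_bdd h11) (by omega) f2).2 hc)
    have hpqP₁' : s(p,q) ∉ P₁'.dual := fun hc =>
      hflip.2.1 ((mem_liftS (dual_bdd hP₁') (by omega) g2).2 hc)
    obtain ⟨x2', y2', hxy2', hc1, hc2, hiff0⟩ := rot_flip_of hrot (by omega) hd hpqP₁'
    have hid : s(u,v) = s(x2',y2') := by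
      by_contra hne
      have hne2 : s(u,v) ≠ s(p,q) := fun hcc => hpqP₁' (hcc ▸ hud)
      exact huP1 ((hiff0 _ hne2 hne).2 hud)
    have hiff : ∀ e, e ≠ s(p,q) → e ≠ s(u,v) → (e ∈ P1.dual ↔ e ∈ P₁'.dual) :=
      fun e g1' g2' => hiff0 e g1' (hid ▸ g2')
    rcases hcase with ⟨hnin, heq⟩ | ⟨hin, T₂', hflip2, heq⟩
    · rw [Prod.mk.injEq] at heq
      obtain ⟨h1e, h2e⟩ := heq
      have hQ1 : Q1 = P₁' := dualT_inj h21 hP₁' (congrArg Triangulation.diags h1e)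
      have hQ2 : Q2 = P2 := dualT_inj h22 h12 (congrArg Triangulation.diags h2e)
      refine ⟨P₁', hrot, .inl ⟨?_, ?_⟩⟩
      · rw [irred_iff_disjoint (by rw [hP₁', h12])]
        intro f hf hf2
        by_cases hfe : f = s(u,v)
        · exact hnin ((mem_liftS (dual_bdd h12) (by omega) f2).2 (hfe ▸ hf2))
        · have hfe2 : f ≠ s(p,q) := fun hcc => hpqP₁' (hcc ▸ hf)
          exact (irred_iff_disjoint (h11.trans h12.symm)).1 hirrP f
            ((hiff f hfe2 hfe).2 hf) hf2
      · rw [hQ1, hQ2]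
    · have hd'P2 : s(u,v) ∈ P2.dual :=
        (mem_liftS (dual_bdd h12) (by omega) f2).1 hin
      obtain ⟨P₂', hP₂', hrot2, hTeq2, w', z', hwz', hz'n, hzd1, hzd2, hnewd2⟩ :=
        isFlip_unique h12 (by omega) hd'P2 hflip2
      subst hTeq2
      rw [Prod.mk.injEq] at heq
      obtain ⟨h1e, h2e⟩ := heq
      have hQ1 : Q1 = P₁' := dualT_inj h21 hP₁' (congrArg Triangulation.diags h1e)
      have hQ2 : Q2 = P₂' := dualT_inj h22 hP₂' (congrArg Triangulation.diags h2e)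
      refine ⟨P₁', hrot, .inr ⟨?_, P₂', hrot2, ?_, ?_⟩⟩
      · rw [irred_iff_disjoint (by rw [hP₁', h12])]
        intro hdisj
        exact hdisj _ hud hd'P2
      · rw [← hQ1, ← hQ2]
        exact hirrQ
      · rw [hQ1, hQ2]

lemma pairFlipSnd_iff_swap {n : ℕ} (p q : Triangulation n × Triangulation n) :
    PairFlipSnd p q ↔ PairFlipFst (p.2, p.1) (q.2, q.1) := by
  constructor
  · rintro ⟨d, T₂', d', h1, h2, (⟨h3, rfl⟩ | ⟨h3, T₁', h4, rfl⟩)⟩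
    · exact ⟨d, T₂', d', h1, h2, .inl ⟨h3, rfl⟩⟩
    · exact ⟨d, T₂', d', h1, h2, .inr ⟨h3, T₁', h4, rfl⟩⟩
  · rintro ⟨d, T₂', d', h1, h2, (⟨h3, heq⟩ | ⟨h3, T₁', h4, heq⟩)⟩
    · refine ⟨d, T₂', d', h1, h2, .inl ⟨h3, ?_⟩⟩
      exact Prod.ext_iff.2 ⟨congrArg Prod.snd heq, congrArg Prod.fst heq⟩
    · refine ⟨d, T₂', d', h1, h2, .inr ⟨h3, T₁', h4, ?_⟩⟩
      exact Prod.ext_iff.2 ⟨congrArg Prod.snd heq, congrArg Prod.fst heq⟩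

lemma lrelSnd_iff_swap {n : ℕ} {P1 P2 Q1 Q2 : PTree}
    (h11 : P1.leaves = n) (h12 : P2.leaves = n) :
    LRelSnd (P1,P2) (Q1,Q2) ↔ LRelFst (P2,P1) (Q2,Q1) := by
  constructor
  · rintro ⟨P₂', hrot, (⟨hirr, heq⟩ | ⟨hnirr, P₁', hrot1, hirr2, heq⟩)⟩
    · refine ⟨P₂', hrot, .inl ⟨?_, ?_⟩⟩
      · exact (irred_swap (by rw [h11, ← hrot.leaves_eq, h12])).1 hirr
      · rw [Prod.mk.injEq] at heq
        exact Prod.ext_iff.2 ⟨heq.2, heq.1⟩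
    · refine ⟨P₂', hrot, .inr ⟨?_, P₁', hrot1, ?_, ?_⟩⟩
      · intro hc
        exact hnirr ((irred_swap (by rw [← hrot.leaves_eq, h12, h11])).1 hc)
      · exact (irred_swap (by rw [← hrot1.leaves_eq, ← hrot.leaves_eq, h11, h12])).1 hirr2
      · rw [Prod.mk.injEq] at heq
        exact Prod.ext_iff.2 ⟨heq.2, heq.1⟩
  · rintro ⟨P₂', hrot, (⟨hirr, heq⟩ | ⟨hnirr, P₁', hrot1, hirr2, heq⟩)⟩
    · refine ⟨P₂', hrot, .inl ⟨?_, ?_⟩⟩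
      · exact (irred_swap (by rw [← hrot.leaves_eq, h12, h11])).1 hirr
      · rw [Prod.mk.injEq] at heq
        exact Prod.ext_iff.2 ⟨heq.2, heq.1⟩
    · refine ⟨P₂', hrot, .inr ⟨?_, P₁', hrot1, ?_, ?_⟩⟩
      · intro hc
        exact hnirr ((irred_swap (by rw [h11, ← hrot.leaves_eq, h12])).1 hc)
      · exact (irred_swap (by rw [← hrot.leaves_eq, ← hrot1.leaves_eq, h11, h12])).1 hirr2
      · rw [Prod.mk.injEq] at heq
        exact Prod.ext_iff.2 ⟨heq.2, heq.1⟩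

lemma lrel_iff {n : ℕ} {P1 P2 Q1 Q2 : PTree} (h11 : P1.leaves = n) (h12 : P2.leaves = n)
    (h21 : Q1.leaves = n) (h22 : Q2.leaves = n)
    (hirrP : IrredLayout (P1, P2)) (hirrQ : IrredLayout (Q1, Q2)) :
    LRel (P1,P2) (Q1,Q2) ↔
      PairFlip (dualT P1 h11, dualT P2 h12) (dualT Q1 h21, dualT Q2 h22) := by
  unfold LRel PairFlip
  refine or_congr (fst_iff h11 h12 h21 h22 hirrP hirrQ) ?_
  refine (lrelSnd_iff_swap h11 h12).trans (Iff.trans ?_ (pairFlipSnd_iff_swap _ _).symm)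
  exact fst_iff h12 h11 h22 h21 ((irred_swap (h11.trans h12.symm)).1 hirrP)
    ((irred_swap (h21.trans h22.symm)).1 hirrQ)

def Fmap (n : ℕ) (p : LVert n) : DVert (n+1) :=
  ⟨(dualT p.1.1 p.2.1, dualT p.1.2 p.2.2.1),
    (liftS_disj_iff p.2.1 p.2.2.1).2
      ((irred_iff_disjoint (p.2.1.trans p.2.2.1.symm)).1 p.2.2.2)⟩



/-- The graph `L_n` of planar layouts of irreducible planar
tanglegrams of size `n` under rotations is isomorphic to the flip graph
`D_{n+1}` on ordered pairs of disjoint triangulations of a convex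
`(n+1)`-gon. -/
theorem LGraph_iso_DGraph (n : ℕ) (hn : 1 ≤ n) :
    Nonempty (LGraph n ≃g DGraph (n + 1)) := by
  classical
  have hinj : Function.Injective (Fmap n) := by
    intro p q h
    have h1 := congrArg (fun x : DVert (n+1) => x.1.1.diags) h
    have h2 := congrArg (fun x : DVert (n+1) => x.1.2.diags) h
    apply Subtype.ext
    exact Prod.ext_iff.2 ⟨dualT_inj p.2.1 q.2.1 h1, dualT_inj p.2.2.1 q.2.2.1 h2⟩
  have hsurj : Function.Surjective (Fmap n) := by
    rintro ⟨⟨T1, T2⟩, hd⟩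
    obtain ⟨P, hP, hPe⟩ := dualT_surj hn T1
    obtain ⟨Q, hQ, hQe⟩ := dualT_surj hn T2
    subst hPe; subst hQe
    have hirr : IrredLayout (P, Q) :=
      (irred_iff_disjoint (hP.trans hQ.symm)).2 ((liftS_disj_iff hP hQ).1 hd)
    exact ⟨⟨(P, Q), hP, hQ, hirr⟩, Subtype.ext (Prod.ext_iff.2
      ⟨Triangulation.ext' rfl, Triangulation.ext' rfl⟩)⟩
  have hrel : ∀ p q : LVert n,
      (DGraph (n+1)).Adj (Fmap n p) (Fmap n q) ↔ (LGraph n).Adj p q := by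
    rintro ⟨⟨P1, P2⟩, hp1, hp2, hirrP⟩ ⟨⟨Q1, Q2⟩, hq1, hq2, hirrQ⟩
    constructor
    · rintro (⟨hne, hor⟩ : _ ≠ _ ∧ _)
      refine ⟨fun hc => hne (congrArg (Fmap n) hc), ?_⟩
      rcases hor with h | h
      · exact .inl ((lrel_iff hp1 hp2 hq1 hq2 hirrP hirrQ).2 h)
      · exact .inr ((lrel_iff hq1 hq2 hp1 hp2 hirrQ hirrP).2 h)
    · rintro (⟨hne, hor⟩ : _ ≠ _ ∧ _)
      refine ⟨fun hc => hne (hinj hc), ?_⟩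
      rcases hor with h | h
      · exact .inl ((lrel_iff hp1 hp2 hq1 hq2 hirrP hirrQ).1 h)
      · exact .inr ((lrel_iff hq1 hq2 hp1 hp2 hirrQ hirrP).1 h)
  exact ⟨⟨Equiv.ofBijective (Fmap n) ⟨hinj, hsurj⟩, @fun a b => hrel a b⟩⟩
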